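/- arXiv:2508.17601 — 12 statements merged into one kernel-verified Lean document; each statement's English description precedes it below -/
import Mathlib

section
/- All solutions in positive integers (n, x, y, z, w) with n ≥ 2 to the equation n^x = (n+1)^y + (n+2)^z + (n+3)^w are (n,x,y,z,w) = (2,5,1,1,2) and (3,3,2,1,1). -/
lemma pow_mod_period (a m P : ℕ) (h : a ^ P ≡ 1 [MOD m]) (e : ℕ) :
    a ^ e ≡ a ^ (e % P) [MOD m] := by
  conv_lhs => rw [← Nat.div_add_mod e P, pow_add, pow_mul]
  calc (a ^ P) ^ (e / P) * a ^ (e % P)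
      ≡ 1 ^ (e / P) * a ^ (e % P) [MOD m] := (h.pow _).mul_right _
    _ = a ^ (e % P) := by rw [one_pow, one_mul]

lemma exists_prime_3mod4 (m : ℕ) (hm : m % 4 = 3) :
    ∃ p, Nat.Prime p ∧ p ∣ m ∧ p % 4 = 3 := by
  induction m using Nat.strong_induction_on with
  | _ m ih =>
    have hm1 : m ≠ 1 := by omega
    have hm0 : m ≠ 0 := by omega
    have hp : (m.minFac).Prime := Nat.minFac_prime hm1
    have hd : m.minFac ∣ m := Nat.minFac_dvd m
    have h2 : ¬ (2 ∣ m.minFac) := by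
      intro hdd
      have : 2 ∣ m := hdd.trans hd
      omega
    rcases Nat.lt_or_ge (m.minFac % 4) 4 with h4 | h4
    · have hmf2 : m.minFac % 2 = 1 := by omega
      rcases (by omega : m.minFac % 4 = 1 ∨ m.minFac % 4 = 3) with h1 | h3
      · obtain ⟨q, hq⟩ := hd
        have hq4 : q % 4 = 3 := by
          have hmm := Nat.mul_mod m.minFac q 4
          rw [← hq, h1, one_mul, Nat.mod_mod_of_dvd _ (by norm_num : (4:ℕ) ∣ 4)] at hmm
          omega
        have hqlt : q < m := by
          have h2le := hp.two_le
          have : q ∣ m := Dvd.intro_left _ hq.symm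
          have hqpos : 0 < q := by
            rcases Nat.eq_zero_or_pos q with h0 | h0
            · subst h0; simp at hq; omega
            · exact h0
          nlinarith [hq]
        obtain ⟨p, pp, pd, p4⟩ := ih q hqlt hq4
        exact ⟨p, pp, pd.trans (Dvd.intro_left _ hq.symm), p4⟩
      · exact ⟨m.minFac, hp, hd, h3⟩
    · omega

lemma not_dvd_sq_add_one (m a : ℕ) (hm : m % 4 = 3) (h : m ∣ a ^ 2 + 1) : False := by
  obtain ⟨p, pp, pd, p4⟩ := exists_prime_3mod4 m hm
  haveI : Fact p.Prime := ⟨pp⟩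
  have hpd : p ∣ a ^ 2 + 1 := pd.trans h
  have hz : ((a : ZMod p)) ^ 2 = -1 := by
    have h0 : ((a ^ 2 + 1 : ℕ) : ZMod p) = 0 :=
      (ZMod.natCast_eq_zero_iff _ _).mpr hpd
    push_cast at h0
    linear_combination h0
  have : IsSquare (-1 : ZMod p) := ⟨a, by rw [← hz]; ring⟩
  rw [ZMod.exists_sq_eq_neg_one_iff] at this
  omega

lemma case_n2 (x y z w : ℕ) (hy : 1 ≤ y) (hz : 1 ≤ z) (hw : 1 ≤ w)
    (h : 2 ^ x = 3 ^ y + 4 ^ z + 5 ^ w) :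
    x = 5 ∧ y = 1 ∧ z = 1 ∧ w = 2 := by
  -- x ≥ 4
  have b3 : 3 ≤ 3 ^ y := Nat.le_self_pow (by omega) 3
  have b4 : 4 ≤ 4 ^ z := Nat.le_self_pow (by omega) 4
  have b5 : 5 ≤ 5 ^ w := Nat.le_self_pow (by omega) 5
  have hx4 : 4 ≤ x := by
    by_contra hc
    have hx3 : x ≤ 3 := by omega
    have : (2:ℕ) ^ x ≤ 2 ^ 3 := Nat.pow_le_pow_right (by norm_num) hx3
    omega
  -- mod 3 : x odd, w even
  have key3 : 2 ^ (x % 2) ≡ 1 + 5 ^ (w % 2) [MOD 3] := by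
    calc 2 ^ (x % 2) ≡ 2 ^ x [MOD 3] := (pow_mod_period 2 3 2 (by decide) x).symm
      _ = 3 ^ y + 4 ^ z + 5 ^ w := h
      _ ≡ 0 + 1 + 5 ^ (w % 2) [MOD 3] := by
          refine Nat.ModEq.add (Nat.ModEq.add ?_ ?_) (pow_mod_period 5 3 2 (by decide) w)
          · exact (Nat.modEq_zero_iff_dvd).mpr (dvd_pow_self 3 (by omega))
          · calc (4:ℕ) ^ z ≡ 1 ^ z [MOD 3] := Nat.ModEq.pow z (by decide)
              _ = 1 := one_pow z
      _ = 1 + 5 ^ (w % 2) := by ring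
  have ext3 : ∀ a < 2, ∀ b < 2, (2 ^ a ≡ 1 + 5 ^ b [MOD 3]) → a = 1 ∧ b = 0 := by decide
  obtain ⟨c1, c2⟩ := ext3 (x % 2) (Nat.mod_lt _ (by norm_num)) (w % 2)
    (Nat.mod_lt _ (by norm_num)) key3
  -- mod 4 : y odd
  have hdvd4 : 3 ^ y + 4 ^ z + 5 ^ w ≡ 0 [MOD 4] := by
    rw [← h]
    exact (Nat.modEq_zero_iff_dvd).mpr (by
      have : (2:ℕ) ^ 2 ∣ 2 ^ x := pow_dvd_pow 2 (by omega)
      simpa using this)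
  have key4 : 3 ^ (y % 2) + 0 + 1 ≡ 0 [MOD 4] := by
    refine Nat.ModEq.trans ?_ hdvd4
    refine Nat.ModEq.add (Nat.ModEq.add ?_ ?_) ?_ |>.symm
    · exact pow_mod_period 3 4 2 (by decide) y
    · exact (Nat.modEq_zero_iff_dvd).mpr (dvd_pow_self 4 (by omega))
    · calc (5:ℕ) ^ w ≡ 1 ^ w [MOD 4] := Nat.ModEq.pow w (by decide)
        _ = 1 := one_pow w
  have ext4 : ∀ b < 2, (3 ^ b + 0 + 1 ≡ 0 [MOD 4]) → b = 1 := by decide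
  have c3 : y % 2 = 1 := ext4 _ (Nat.mod_lt _ (by norm_num)) key4
  -- mod 8 : z = 1
  have e8y : 3 ^ y ≡ 3 [MOD 8] := by
    have := pow_mod_period 3 8 2 (by decide) y
    rw [c3] at this; simpa using this
  have e8w : 5 ^ w ≡ 1 [MOD 8] := by
    have := pow_mod_period 5 8 2 (by decide) w
    rw [c2] at this; simpa using this
  have hdvd8 : 3 ^ y + 4 ^ z + 5 ^ w ≡ 0 [MOD 8] := by
    rw [← h]
    exact (Nat.modEq_zero_iff_dvd).mpr (by
      have : (2:ℕ) ^ 3 ∣ 2 ^ x := pow_dvd_pow 2 (by omega)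
      simpa using this)
  have hz1 : z = 1 := by
    rcases Nat.lt_or_ge z 2 with h' | h'
    · omega
    · exfalso
      have e8z : (4:ℕ) ^ z ≡ 0 [MOD 8] := by
        refine (Nat.modEq_zero_iff_dvd).mpr (dvd_trans (c := 4 ^ z) (by norm_num : (8:ℕ) ∣ 16) ?_)
        have : (4:ℕ) ^ 2 ∣ 4 ^ z := pow_dvd_pow 4 h'
        simpa using this
      have : 3 + 0 + 1 ≡ 0 [MOD 8] :=
        (((e8y.add e8z).add e8w).symm).trans hdvd8
      exact absurd this (by decide)
  subst hz1
  rw [pow_one] at h b4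
  -- mod 16 : (y%4, w%4) ∈ {(1,2),(3,0)}
  have hdvd16 : 3 ^ y + 4 + 5 ^ w ≡ 0 [MOD 16] := by
    rw [← h]
    exact (Nat.modEq_zero_iff_dvd).mpr (by
      have : (2:ℕ) ^ 4 ∣ 2 ^ x := pow_dvd_pow 2 (by omega)
      simpa using this)
  have key16 : 3 ^ (y % 4) + 4 + 5 ^ (w % 4) ≡ 0 [MOD 16] := by
    refine Nat.ModEq.trans ?_ hdvd16
    exact (((pow_mod_period 3 16 4 (by decide) y).add (Nat.ModEq.refl 4)).add
      (pow_mod_period 5 16 4 (by decide) w)).symm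
  have ext16 : ∀ a < 4, ∀ b < 4, a % 2 = 1 ∧ b % 2 = 0 ∧
      (3 ^ a + 4 + 5 ^ b ≡ 0 [MOD 16]) → (a = 1 ∧ b = 2) ∨ (a = 3 ∧ b = 0) := by decide
  have hdisj := ext16 (y % 4) (Nat.mod_lt _ (by norm_num)) (w % 4)
    (Nat.mod_lt _ (by norm_num)) ⟨by omega, by omega, key16⟩
  -- mod 5 : x % 4 = 1, y % 4 = 1
  have key5 : 2 ^ (x % 4) ≡ 3 ^ (y % 4) + 4 + 0 [MOD 5] := by
    calc 2 ^ (x % 4) ≡ 2 ^ x [MOD 5] := (pow_mod_period 2 5 4 (by decide) x).symm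
      _ = 3 ^ y + 4 + 5 ^ w := h
      _ ≡ 3 ^ (y % 4) + 4 + 0 [MOD 5] := by
          refine Nat.ModEq.add (Nat.ModEq.add (pow_mod_period 3 5 4 (by decide) y)
            (Nat.ModEq.refl 4)) ?_
          exact (Nat.modEq_zero_iff_dvd).mpr (dvd_pow_self 5 (by omega))
  have ext5 : ∀ a < 4, ∀ b < 4, a % 2 = 1 ∧ b % 2 = 1 ∧
      (2 ^ a ≡ 3 ^ b + 4 + 0 [MOD 5]) → a = 1 ∧ b = 1 := by decide
  obtain ⟨c5, c6⟩ := ext5 (x % 4) (Nat.mod_lt _ (by norm_num)) (y % 4)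
    (Nat.mod_lt _ (by norm_num)) ⟨by omega, by omega, key5⟩
  have c7 : w % 4 = 2 := by omega
  -- mod 13 : x % 12 = 5, y % 3 = 1
  have e13w : (5:ℕ) ^ w ≡ 25 [MOD 13] := by
    have := pow_mod_period 5 13 4 (by decide) w
    rw [c7] at this; simpa using this
  have key13 : 2 ^ (x % 12) ≡ 3 ^ (y % 3) + 4 + 25 [MOD 13] := by
    calc 2 ^ (x % 12) ≡ 2 ^ x [MOD 13] := (pow_mod_period 2 13 12 (by decide) x).symm
      _ = 3 ^ y + 4 + 5 ^ w := h
      _ ≡ 3 ^ (y % 3) + 4 + 25 [MOD 13] :=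
          Nat.ModEq.add (Nat.ModEq.add (pow_mod_period 3 13 3 (by decide) y)
            (Nat.ModEq.refl 4)) e13w
  have ext13 : ∀ a < 12, ∀ b < 3, a % 4 = 1 →
      (2 ^ a ≡ 3 ^ b + 4 + 25 [MOD 13]) → a = 5 ∧ b = 1 := by decide
  obtain ⟨c8, c9⟩ := ext13 (x % 12) (Nat.mod_lt _ (by norm_num)) (y % 3)
    (Nat.mod_lt _ (by norm_num)) (by omega) key13
  -- mod 7 : w % 6 = 2
  have e7x : (2:ℕ) ^ x ≡ 4 [MOD 7] := by
    have := pow_mod_period 2 7 3 (by decide) x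
    have r1 : x % 3 = 2 := by omega
    rw [r1] at this; simpa using this
  have e7y : (3:ℕ) ^ y ≡ 3 [MOD 7] := by
    have := pow_mod_period 3 7 6 (by decide) y
    have r2 : y % 6 = 1 := by omega
    rw [r2] at this; simpa using this
  have key7 : (4:ℕ) ≡ 3 + 4 + 5 ^ (w % 6) [MOD 7] := by
    calc (4:ℕ) ≡ 2 ^ x [MOD 7] := e7x.symm
      _ = 3 ^ y + 4 + 5 ^ w := h
      _ ≡ 3 + 4 + 5 ^ (w % 6) [MOD 7] :=
          Nat.ModEq.add (Nat.ModEq.add e7y (Nat.ModEq.refl 4))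
            (pow_mod_period 5 7 6 (by decide) w)
  have ext7 : ∀ b < 6, ((4:ℕ) ≡ 3 + 4 + 5 ^ b [MOD 7]) → b = 2 := by decide
  have c10 : w % 6 = 2 := ext7 _ (Nat.mod_lt _ (by norm_num)) key7
  -- mod 9 : y = 1
  have c11 : y = 1 := by
    by_contra hc
    have hy2 : 2 ≤ y := by omega
    have e9y : (3:ℕ) ^ y ≡ 0 [MOD 9] := by
      refine (Nat.modEq_zero_iff_dvd).mpr ?_
      have : (3:ℕ) ^ 2 ∣ 3 ^ y := pow_dvd_pow 3 hy2
      simpa using this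
    have e9x : (2:ℕ) ^ x ≡ 32 [MOD 9] := by
      have := pow_mod_period 2 9 6 (by decide) x
      have r1 : x % 6 = 5 := by omega
      rw [r1] at this; simpa using this
    have e9w : (5:ℕ) ^ w ≡ 25 [MOD 9] := by
      have := pow_mod_period 5 9 6 (by decide) w
      rw [c10] at this; simpa using this
    have : (32:ℕ) ≡ 0 + 4 + 25 [MOD 9] := by
      calc (32:ℕ) ≡ 2 ^ x [MOD 9] := e9x.symm
        _ = 3 ^ y + 4 + 5 ^ w := h
        _ ≡ 0 + 4 + 25 [MOD 9] := Nat.ModEq.add (Nat.ModEq.add e9y (Nat.ModEq.refl 4)) e9w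
    exact absurd this (by decide)
  subst c11
  rw [pow_one] at h
  -- now 2^x = 7 + 5^w
  have h7 : 2 ^ x = 7 + 5 ^ w := by omega
  -- mod 25 : x % 20 = 5
  have key25 : 2 ^ (x % 20) ≡ 7 + 0 [MOD 25] := by
    calc 2 ^ (x % 20) ≡ 2 ^ x [MOD 25] := (pow_mod_period 2 25 20 (by decide) x).symm
      _ = 7 + 5 ^ w := h7
      _ ≡ 7 + 0 [MOD 25] := Nat.ModEq.add (Nat.ModEq.refl 7)
          ((Nat.modEq_zero_iff_dvd).mpr (by
            have : (5:ℕ) ^ 2 ∣ 5 ^ w := pow_dvd_pow 5 (by omega)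
            simpa using this))
  have ext25 : ∀ a < 20, (2 ^ a ≡ 7 + 0 [MOD 25]) → a = 5 := by decide
  have c12 : x % 20 = 5 := ext25 _ (Nat.mod_lt _ (by norm_num)) key25
  -- w = 2
  have hw2 : w = 2 := by
    by_contra hc
    have hw3 : 3 ≤ w := by omega
    have key125 : 2 ^ (x % 100) ≡ 7 + 0 [MOD 125] := by
      calc 2 ^ (x % 100) ≡ 2 ^ x [MOD 125] := (pow_mod_period 2 125 100 (by decide) x).symm
        _ = 7 + 5 ^ w := h7
        _ ≡ 7 + 0 [MOD 125] := Nat.ModEq.add (Nat.ModEq.refl 7)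
            ((Nat.modEq_zero_iff_dvd).mpr (by
              have : (5:ℕ) ^ 3 ∣ 5 ^ w := pow_dvd_pow 5 hw3
              simpa using this))
    have ext125 : ∀ a < 100, a % 20 = 5 → (2 ^ a ≡ 7 + 0 [MOD 125]) → a = 85 := by decide
    have c13 : x % 100 = 85 := ext125 _ (Nat.mod_lt _ (by norm_num)) (by omega) key125
    have e101x : (2:ℕ) ^ x ≡ 2 ^ 85 [MOD 101] := by
      have := pow_mod_period 2 101 100 (by decide) x
      rw [c13] at this; exact this
    have key101 : (2:ℕ) ^ 85 ≡ 7 + 5 ^ (w % 25) [MOD 101] := by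
      calc (2:ℕ) ^ 85 ≡ 2 ^ x [MOD 101] := e101x.symm
        _ = 7 + 5 ^ w := h7
        _ ≡ 7 + 5 ^ (w % 25) [MOD 101] :=
            Nat.ModEq.add (Nat.ModEq.refl 7) (pow_mod_period 5 101 25 (by decide) w)
    have ext101 : ∀ b < 25, ¬ ((2:ℕ) ^ 85 ≡ 7 + 5 ^ b [MOD 101]) := by decide
    exact ext101 _ (Nat.mod_lt _ (by norm_num)) key101
  subst hw2
  norm_num at h7
  have : (2:ℕ) ^ x = 2 ^ 5 := by norm_num [h7]
  have : x = 5 := Nat.pow_right_injective (le_refl 2) this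
  exact ⟨this, rfl, rfl, rfl⟩

lemma case_n3 (x y z : ℕ) (hx : 1 ≤ x) (hy : 1 ≤ y) (hz : 1 ≤ z)
    (h : 3 ^ x = 4 ^ y + 5 ^ z + 6) :
    x = 3 ∧ y = 2 ∧ z = 1 := by
  have b4 : 4 ≤ 4 ^ y := Nat.le_self_pow (by omega) 4
  have b5 : 5 ≤ 5 ^ z := Nat.le_self_pow (by omega) 5
  have hx3 : 3 ≤ x := by
    by_contra hc
    have : (3:ℕ) ^ x ≤ 3 ^ 2 := Nat.pow_le_pow_right (by norm_num) (by omega)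
    omega
  -- mod 4 : x odd
  have key4 : 3 ^ (x % 2) ≡ 0 + 1 + 2 [MOD 4] := by
    calc 3 ^ (x % 2) ≡ 3 ^ x [MOD 4] := (pow_mod_period 3 4 2 (by decide) x).symm
      _ = 4 ^ y + 5 ^ z + 6 := h
      _ ≡ 0 + 1 + 2 [MOD 4] := by
          refine Nat.ModEq.add (Nat.ModEq.add ?_ ?_) (by decide)
          · exact (Nat.modEq_zero_iff_dvd).mpr (dvd_pow_self 4 (by omega))
          · calc (5:ℕ) ^ z ≡ 1 ^ z [MOD 4] := Nat.ModEq.pow z (by decide)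
              _ = 1 := one_pow z
  have ext4 : ∀ a < 2, (3 ^ a ≡ 0 + 1 + 2 [MOD 4]) → a = 1 := by decide
  have c1 : x % 2 = 1 := ext4 _ (Nat.mod_lt _ (by norm_num)) key4
  -- mod 3 : z odd
  have key3 : (0:ℕ) ≡ 1 + 5 ^ (z % 2) + 0 [MOD 3] := by
    calc (0:ℕ) ≡ 3 ^ x [MOD 3] :=
          ((Nat.modEq_zero_iff_dvd).mpr (dvd_pow_self 3 (by omega))).symm
      _ = 4 ^ y + 5 ^ z + 6 := h
      _ ≡ 1 + 5 ^ (z % 2) + 0 [MOD 3] := by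
          refine Nat.ModEq.add (Nat.ModEq.add ?_ (pow_mod_period 5 3 2 (by decide) z)) (by decide)
          calc (4:ℕ) ^ y ≡ 1 ^ y [MOD 3] := Nat.ModEq.pow y (by decide)
            _ = 1 := one_pow y
  have ext3 : ∀ b < 2, ((0:ℕ) ≡ 1 + 5 ^ b + 0 [MOD 3]) → b = 1 := by decide
  have c2 : z % 2 = 1 := ext3 _ (Nat.mod_lt _ (by norm_num)) key3
  -- mod 8 : y ≥ 2
  have e8x : (3:ℕ) ^ x ≡ 3 [MOD 8] := by
    have := pow_mod_period 3 8 2 (by decide) x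
    rw [c1] at this; simpa using this
  have e8z : (5:ℕ) ^ z ≡ 5 [MOD 8] := by
    have := pow_mod_period 5 8 2 (by decide) z
    rw [c2] at this; simpa using this
  have c3 : 2 ≤ y := by
    by_contra hc
    have hy1 : y = 1 := by omega
    have : (3:ℕ) ≡ 4 + 5 + 6 [MOD 8] := by
      calc (3:ℕ) ≡ 3 ^ x [MOD 8] := e8x.symm
        _ = 4 ^ y + 5 ^ z + 6 := h
        _ ≡ 4 + 5 + 6 [MOD 8] := by
            rw [hy1, pow_one]
            exact Nat.ModEq.add (Nat.ModEq.add (Nat.ModEq.refl 4) e8z) (Nat.ModEq.refl 6)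
    exact absurd this (by decide)
  -- mod 5 : x % 4 = 3, y even
  have key5 : 3 ^ (x % 4) ≡ 4 ^ (y % 2) + 0 + 6 [MOD 5] := by
    calc 3 ^ (x % 4) ≡ 3 ^ x [MOD 5] := (pow_mod_period 3 5 4 (by decide) x).symm
      _ = 4 ^ y + 5 ^ z + 6 := h
      _ ≡ 4 ^ (y % 2) + 0 + 6 [MOD 5] := by
          refine Nat.ModEq.add (Nat.ModEq.add (pow_mod_period 4 5 2 (by decide) y) ?_)
            (Nat.ModEq.refl 6)
          exact (Nat.modEq_zero_iff_dvd).mpr (dvd_pow_self 5 (by omega))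
  have ext5 : ∀ a < 4, ∀ b < 2, a % 2 = 1 ∧ (3 ^ a ≡ 4 ^ b + 0 + 6 [MOD 5]) →
      a = 3 ∧ b = 0 := by decide
  obtain ⟨c4, c5⟩ := ext5 (x % 4) (Nat.mod_lt _ (by norm_num)) (y % 2)
    (Nat.mod_lt _ (by norm_num)) ⟨by omega, key5⟩
  -- mod 16 : z % 4 = 1
  have e16x : (3:ℕ) ^ x ≡ 27 [MOD 16] := by
    have := pow_mod_period 3 16 4 (by decide) x
    rw [c4] at this; simpa using this
  have e16y : (4:ℕ) ^ y ≡ 0 [MOD 16] := by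
    refine (Nat.modEq_zero_iff_dvd).mpr ?_
    have : (4:ℕ) ^ 2 ∣ 4 ^ y := pow_dvd_pow 4 c3
    simpa using this
  have key16 : (27:ℕ) ≡ 0 + 5 ^ (z % 4) + 6 [MOD 16] := by
    calc (27:ℕ) ≡ 3 ^ x [MOD 16] := e16x.symm
      _ = 4 ^ y + 5 ^ z + 6 := h
      _ ≡ 0 + 5 ^ (z % 4) + 6 [MOD 16] :=
          Nat.ModEq.add (Nat.ModEq.add e16y (pow_mod_period 5 16 4 (by decide) z))
            (Nat.ModEq.refl 6)
  have ext16 : ∀ b < 4, ((27:ℕ) ≡ 0 + 5 ^ b + 6 [MOD 16]) → b = 1 := by decide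
  have c6 : z % 4 = 1 := ext16 _ (Nat.mod_lt _ (by norm_num)) key16
  -- mod 13 : x % 3 = 0, y % 6 = 2
  have e13z : (5:ℕ) ^ z ≡ 5 [MOD 13] := by
    have := pow_mod_period 5 13 4 (by decide) z
    rw [c6] at this; simpa using this
  have key13 : 3 ^ (x % 3) ≡ 4 ^ (y % 6) + 5 + 6 [MOD 13] := by
    calc 3 ^ (x % 3) ≡ 3 ^ x [MOD 13] := (pow_mod_period 3 13 3 (by decide) x).symm
      _ = 4 ^ y + 5 ^ z + 6 := h
      _ ≡ 4 ^ (y % 6) + 5 + 6 [MOD 13] :=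
          Nat.ModEq.add (Nat.ModEq.add (pow_mod_period 4 13 6 (by decide) y) e13z)
            (Nat.ModEq.refl 6)
  have ext13 : ∀ a < 3, ∀ b < 6, b % 2 = 0 ∧ (3 ^ a ≡ 4 ^ b + 5 + 6 [MOD 13]) →
      a = 0 ∧ b = 2 := by decide
  obtain ⟨c7, c8⟩ := ext13 (x % 3) (Nat.mod_lt _ (by norm_num)) (y % 6)
    (Nat.mod_lt _ (by norm_num)) ⟨by omega, key13⟩
  -- mod 9 : z % 6 = 1
  have e9x : (3:ℕ) ^ x ≡ 0 [MOD 9] := by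
    refine (Nat.modEq_zero_iff_dvd).mpr ?_
    have : (3:ℕ) ^ 2 ∣ 3 ^ x := pow_dvd_pow 3 (by omega)
    simpa using this
  have e9y : (4:ℕ) ^ y ≡ 16 [MOD 9] := by
    have := pow_mod_period 4 9 3 (by decide) y
    have r : y % 3 = 2 := by omega
    rw [r] at this; simpa using this
  have key9 : (0:ℕ) ≡ 16 + 5 ^ (z % 6) + 6 [MOD 9] := by
    calc (0:ℕ) ≡ 3 ^ x [MOD 9] := e9x.symm
      _ = 4 ^ y + 5 ^ z + 6 := h
      _ ≡ 16 + 5 ^ (z % 6) + 6 [MOD 9] :=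
          Nat.ModEq.add (Nat.ModEq.add e9y (pow_mod_period 5 9 6 (by decide) z))
            (Nat.ModEq.refl 6)
  have ext9 : ∀ b < 6, ((0:ℕ) ≡ 16 + 5 ^ b + 6 [MOD 9]) → b = 1 := by decide
  have c9 : z % 6 = 1 := ext9 _ (Nat.mod_lt _ (by norm_num)) key9
  -- z = 1
  have hz1 : z = 1 := by
    by_contra hc
    have hz2 : 2 ≤ z := by omega
    have key25 : 3 ^ ((x % 60) % 20) ≡ 4 ^ ((y % 30) % 10) + 0 + 6 [MOD 25] := by
      have r1 : (x % 60) % 20 = x % 20 := by omega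
      have r2 : (y % 30) % 10 = y % 10 := by omega
      rw [r1, r2]
      calc 3 ^ (x % 20) ≡ 3 ^ x [MOD 25] := (pow_mod_period 3 25 20 (by decide) x).symm
        _ = 4 ^ y + 5 ^ z + 6 := h
        _ ≡ 4 ^ (y % 10) + 0 + 6 [MOD 25] := by
            refine Nat.ModEq.add (Nat.ModEq.add (pow_mod_period 4 25 10 (by decide) y) ?_)
              (Nat.ModEq.refl 6)
            refine (Nat.modEq_zero_iff_dvd).mpr ?_
            have : (5:ℕ) ^ 2 ∣ 5 ^ z := pow_dvd_pow 5 hz2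
            simpa using this
    have e31z : (5:ℕ) ^ z ≡ 5 [MOD 31] := by
      have := pow_mod_period 5 31 3 (by decide) z
      have r : z % 3 = 1 := by omega
      rw [r] at this; simpa using this
    have key31 : 3 ^ ((x % 60) % 30) ≡ 4 ^ (y % 30) + 5 + 6 [MOD 31] := by
      have r1 : (x % 60) % 30 = x % 30 := by omega
      rw [r1]
      calc 3 ^ (x % 30) ≡ 3 ^ x [MOD 31] := (pow_mod_period 3 31 30 (by decide) x).symm
        _ = 4 ^ y + 5 ^ z + 6 := h
        _ ≡ 4 ^ (y % 30) + 5 + 6 [MOD 31] :=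
            Nat.ModEq.add (Nat.ModEq.add (pow_mod_period 4 31 30 (by decide) y) e31z)
              (Nat.ModEq.refl 6)
    have ext3125 : ∀ a < 60, ∀ b < 30, a % 12 = 3 ∧ b % 6 = 2 ∧
        (3 ^ (a % 20) ≡ 4 ^ (b % 10) + 0 + 6 [MOD 25]) ∧
        (3 ^ (a % 30) ≡ 4 ^ b + 5 + 6 [MOD 31]) → False := by decide
    exact ext3125 (x % 60) (Nat.mod_lt _ (by norm_num)) (y % 30) (Nat.mod_lt _ (by norm_num))
      ⟨by omega, by omega, key25, key31⟩
  subst hz1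
  rw [pow_one] at h
  -- y = 2
  have hy2 : y = 2 := by
    by_contra hc
    have hy3 : 3 ≤ y := by omega
    have e64y : (4:ℕ) ^ y ≡ 0 [MOD 64] := by
      refine (Nat.modEq_zero_iff_dvd).mpr ?_
      have : (4:ℕ) ^ 3 ∣ 4 ^ y := pow_dvd_pow 4 hy3
      simpa using this
    have key64 : 3 ^ (x % 16) ≡ 0 + 5 + 6 [MOD 64] := by
      calc 3 ^ (x % 16) ≡ 3 ^ x [MOD 64] := (pow_mod_period 3 64 16 (by decide) x).symm
        _ = 4 ^ y + 5 + 6 := h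
        _ ≡ 0 + 5 + 6 [MOD 64] :=
            Nat.ModEq.add (Nat.ModEq.add e64y (Nat.ModEq.refl 5)) (Nat.ModEq.refl 6)
    have ext64 : ∀ a < 16, (3 ^ a ≡ 0 + 5 + 6 [MOD 64]) → a = 7 := by decide
    have c10 : x % 16 = 7 := ext64 _ (Nat.mod_lt _ (by norm_num)) key64
    have e17x : (3:ℕ) ^ x ≡ 3 ^ 7 [MOD 17] := by
      have := pow_mod_period 3 17 16 (by decide) x
      rw [c10] at this; exact this
    have key17 : (3:ℕ) ^ 7 ≡ 4 ^ (y % 4) + 5 + 6 [MOD 17] := by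
      calc (3:ℕ) ^ 7 ≡ 3 ^ x [MOD 17] := e17x.symm
        _ = 4 ^ y + 5 + 6 := h
        _ ≡ 4 ^ (y % 4) + 5 + 6 [MOD 17] :=
            Nat.ModEq.add (Nat.ModEq.add (pow_mod_period 4 17 4 (by decide) y)
              (Nat.ModEq.refl 5)) (Nat.ModEq.refl 6)
    have ext17 : ∀ b < 4, ¬ ((3:ℕ) ^ 7 ≡ 4 ^ b + 5 + 6 [MOD 17]) := by decide
    exact ext17 _ (Nat.mod_lt _ (by norm_num)) key17
  subst hy2
  norm_num at h
  have : (3:ℕ) ^ x = 3 ^ 3 := by norm_num [h]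
  exact ⟨Nat.pow_right_injective (by norm_num) this, rfl, rfl⟩

theorem stmt_0 (n x y z w : ℕ) (hn : 2 ≤ n)
    (hx : 1 ≤ x) (hy : 1 ≤ y) (hz : 1 ≤ z) (hw : 1 ≤ w) :
    n ^ x = (n + 1) ^ y + (n + 2) ^ z + (n + 3) ^ w ↔
      (n, x, y, z, w) = (2, 5, 1, 1, 2) ∨ (n, x, y, z, w) = (3, 3, 2, 1, 1) := by
  constructor
  · intro h
    have hb1 : n + 1 ≤ (n+1) ^ y := Nat.le_self_pow (by omega) _
    have hb2 : n + 2 ≤ (n+2) ^ z := Nat.le_self_pow (by omega) _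
    have hb3 : n + 3 ≤ (n+3) ^ w := Nat.le_self_pow (by omega) _
    have hx2 : 2 ≤ x := by
      by_contra hc
      have hx1 : x = 1 := by omega
      rw [hx1, pow_one] at h
      omega
    -- main congruences
    have H2 : (-1 : ZMod (n+1)) ^ x = 1 + 2 ^ w := by
      have hcast := congrArg (fun t : ℕ => (t : ZMod (n+1))) h
      push_cast at hcast
      have e1 : ((n : ℕ) : ZMod (n+1)) = -1 := by
        have h0 := ZMod.natCast_self (n+1)
        push_cast at h0
        exact eq_neg_of_add_eq_zero_left h0
      rw [e1] at hcast
      have hy0 : y ≠ 0 := by omega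
      norm_num [zero_pow hy0] at hcast
      exact hcast
    have H3 : (-2 : ZMod (n+2)) ^ x = (-1) ^ y + 1 := by
      have hcast := congrArg (fun t : ℕ => (t : ZMod (n+2))) h
      push_cast at hcast
      have e1 : ((n : ℕ) : ZMod (n+2)) = -2 := by
        have h0 := ZMod.natCast_self (n+2)
        push_cast at h0
        exact eq_neg_of_add_eq_zero_left h0
      rw [e1] at hcast
      have hz0 : z ≠ 0 := by omega
      norm_num [zero_pow hz0] at hcast
      convert hcast using 2 <;> norm_num
    have D1 : n ∣ 1 + 2 ^ z + 3 ^ w := by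
      have hcast := congrArg (fun t : ℕ => (t : ZMod n)) h
      push_cast at hcast
      rw [ZMod.natCast_self] at hcast
      have hx0 : x ≠ 0 := by omega
      norm_num [zero_pow hx0] at hcast
      have : ((1 + 2 ^ z + 3 ^ w : ℕ) : ZMod n) = 0 := by
        push_cast
        linear_combination -hcast
      exact (ZMod.natCast_eq_zero_iff _ _).mp this
    have hps2w := pow_succ 2 (w-1)
    rw [(by omega : w - 1 + 1 = w)] at hps2w
    rcases (by omega : n % 2 = 0 ∨ n % 2 = 1) with hpar | hpar
    · ------------------------------------------------------------------ n even
      have hxodd : x % 2 = 1 := by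
        by_contra hc
        have hxE : Even x := Nat.even_iff.mpr (by omega)
        rw [hxE.neg_one_pow] at H2
        have : ((2 ^ w : ℕ) : ZMod (n+1)) = 0 := by
          push_cast
          linear_combination -H2
        have hdvd : (n+1) ∣ 2 ^ w := (ZMod.natCast_eq_zero_iff _ _).mp this
        obtain ⟨s, _, hns⟩ := (Nat.dvd_prime_pow Nat.prime_two).mp hdvd
        rcases Nat.eq_zero_or_pos s with h0 | h0
        · rw [h0] at hns
          norm_num at hns
          omega
        · have : 2 ∣ 2 ^ s := dvd_pow_self 2 (by omega)
          rw [← hns] at this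
          omega
      have hxO : Odd x := Nat.odd_iff.mpr hxodd
      have D2 : (n+1) ∣ 2 ^ w + 2 := by
        rw [hxO.neg_one_pow] at H2
        have : ((2 ^ w + 2 : ℕ) : ZMod (n+1)) = 0 := by
          push_cast
          linear_combination -H2
        exact (ZMod.natCast_eq_zero_iff _ _).mp this
      have hD2' : (n+1) ∣ 2 ^ (w-1) + 1 := by
        have h2w : 2 ^ w + 2 = 2 * (2 ^ (w-1) + 1) := by omega
        rw [h2w] at D2
        have hco : Nat.Coprime (n+1) 2 := by
          rw [Nat.coprime_comm]
          exact (Nat.prime_two.coprime_iff_not_dvd).mpr (by omega)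
        exact hco.dvd_of_dvd_mul_left D2
      rcases (by omega : n % 4 = 2 ∨ n % 4 = 0) with hm4 | hm4
      · -- n ≡ 2 mod 4
        have hyodd : y % 2 = 1 := by
          by_contra hc
          have hyE : Even y := Nat.even_iff.mpr (by omega)
          rw [hyE.neg_one_pow, Odd.neg_pow hxO] at H3
          have : ((2 ^ x + 2 : ℕ) : ZMod (n+2)) = 0 := by
            push_cast
            linear_combination -H3
          have hdvd : (n+2) ∣ 2 ^ x + 2 := (ZMod.natCast_eq_zero_iff _ _).mp this
          have h4 : (4:ℕ) ∣ n + 2 := by omega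
          have h4' : (4:ℕ) ∣ 2 ^ x + 2 := h4.trans hdvd
          have h4x : (4:ℕ) ∣ 2 ^ x := by
            have : (2:ℕ) ^ 2 ∣ 2 ^ x := pow_dvd_pow 2 hx2
            simpa using this
          omega
        have hyO : Odd y := Nat.odd_iff.mpr hyodd
        have hdvd : (n+2) ∣ 2 ^ x := by
          rw [hyO.neg_one_pow, Odd.neg_pow hxO] at H3
          have : ((2 ^ x : ℕ) : ZMod (n+2)) = 0 := by
            push_cast
            linear_combination -H3
          exact (ZMod.natCast_eq_zero_iff _ _).mp this
        obtain ⟨t, _, hnt⟩ := (Nat.dvd_prime_pow Nat.prime_two).mp hdvd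
        rcases (by omega : n = 2 ∨ 6 ≤ n) with rfl | hn6
        · left
          obtain ⟨ex, ey, ez, ew⟩ := case_n2 x y z w hy hz hw (by norm_num at h; exact h)
          simp [ex, ey, ez, ew]
        · exfalso
          have ht3 : 3 ≤ t := by
            by_contra hc
            have hle : 2 ^ t ≤ 2 ^ 2 := Nat.pow_le_pow_right (by norm_num) (by omega)
            have he : (2:ℕ) ^ 2 = 4 := by norm_num
            omega
          have hper : (2:ℕ) ^ t ≡ 1 [MOD n+1] := by
            show 2 ^ t % (n+1) = 1 % (n+1)
            rw [← hnt, (by ring : n + 2 = (n+1) + 1), Nat.add_mod_left]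
          have hmod := pow_mod_period 2 (n+1) t hper (w-1)
          have hdvd2 : (n+1) ∣ 2 ^ ((w-1) % t) + 1 :=
            Nat.modEq_zero_iff_dvd.mp
              (((hmod.add_right 1).symm).trans (Nat.modEq_zero_iff_dvd.mpr hD2'))
          have hrlt : (w-1) % t < t := Nat.mod_lt _ (by omega)
          have hle : 2 ^ ((w-1) % t) ≤ 2 ^ (t-1) :=
            Nat.pow_le_pow_right (by norm_num) (by omega)
          have hsz : n + 1 ≤ 2 ^ ((w-1) % t) + 1 := Nat.le_of_dvd (by positivity) hdvd2
          have h2t := pow_succ 2 (t-1)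
          rw [(by omega : t - 1 + 1 = t)] at h2t
          have h4t : 4 ≤ 2 ^ (t-1) := by
            calc (4:ℕ) = 2 ^ 2 := by norm_num
              _ ≤ 2 ^ (t-1) := Nat.pow_le_pow_right (by norm_num) (by omega)
          omega
      · -- n ≡ 0 mod 4
        have hyeven : y % 2 = 0 := by
          by_contra hc
          have hyO : Odd y := Nat.odd_iff.mpr (by omega)
          rw [hyO.neg_one_pow, Odd.neg_pow hxO] at H3
          have : ((2 ^ x : ℕ) : ZMod (n+2)) = 0 := by
            push_cast
            linear_combination -H3
          have hdvd : (n+2) ∣ 2 ^ x := (ZMod.natCast_eq_zero_iff _ _).mp this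
          obtain ⟨t, _, hnt⟩ := (Nat.dvd_prime_pow Nat.prime_two).mp hdvd
          have ht2 : 2 ≤ t := by
            by_contra hc2
            have hle : 2 ^ t ≤ 2 ^ 1 := Nat.pow_le_pow_right (by norm_num) (by omega)
            have he : (2:ℕ) ^ 1 = 2 := by norm_num
            omega
          have h4d : (4:ℕ) ∣ 2 ^ t := by
            have : (2:ℕ) ^ 2 ∣ 2 ^ t := pow_dvd_pow 2 ht2
            simpa using this
          omega
        have hyE : Even y := Nat.even_iff.mpr hyeven
        have hC2 : (n+2) ∣ 2 ^ x + 2 := by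
          rw [hyE.neg_one_pow, Odd.neg_pow hxO] at H3
          have : ((2 ^ x + 2 : ℕ) : ZMod (n+2)) = 0 := by
            push_cast
            linear_combination -H3
          exact (ZMod.natCast_eq_zero_iff _ _).mp this
        obtain ⟨m, hm⟩ : 2 ∣ n + 2 := by omega
        have hmodd : m % 2 = 1 := by omega
        have hps2x := pow_succ 2 (x-1)
        rw [(by omega : x - 1 + 1 = x)] at hps2x
        have hCm : m ∣ 2 ^ (x-1) + 1 := by
          have h2x : 2 ^ x + 2 = 2 * (2 ^ (x-1) + 1) := by omega
          rw [hm, h2x] at hC2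
          exact (mul_dvd_mul_iff_left (by norm_num : (2:ℕ) ≠ 0)).mp hC2
        have hsq : 2 ^ (x-1) = (2 ^ ((x-1)/2)) ^ 2 := by
          rw [← pow_mul]
          congr 1
          omega
        have hm41 : m % 4 = 1 := by
          rcases (by omega : m % 4 = 1 ∨ m % 4 = 3) with h1 | h3
          · exact h1
          · exact absurd (hsq ▸ hCm) (fun hd => not_dvd_sq_add_one m _ h3 hd)
        exfalso
        have h8 : (8:ℕ) ∣ 1 + 2 ^ z + 3 ^ w := dvd_trans (by omega) D1
        have h3w : 3 ^ w % 8 = 3 ^ (w % 2) % 8 := pow_mod_period 3 8 2 (by decide) w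
        have h8' : (8:ℕ) ∣ 1 + 2 ^ z + 3 ^ (w % 2) := by
          have heq : (1 + 2 ^ z + 3 ^ w) % 8 = (1 + 2 ^ z + 3 ^ (w % 2)) % 8 :=
            Nat.ModEq.add (Nat.ModEq.refl _) h3w
          omega
        have hzw : z = 2 ∧ w % 2 = 1 := by
          rcases (by omega : z = 1 ∨ z = 2 ∨ 3 ≤ z) with rfl | rfl | hz3
          · exfalso
            rcases (by omega : w % 2 = 0 ∨ w % 2 = 1) with hww | hww <;>
              rw [hww] at h8' <;> norm_num at h8' <;> omega
          · rcases (by omega : w % 2 = 0 ∨ w % 2 = 1) with hww | hww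
            · exfalso
              rw [hww] at h8'
              norm_num at h8'
            · exact ⟨rfl, hww⟩
          · exfalso
            have h8z : (8:ℕ) ∣ 2 ^ z := by
              have : (2:ℕ) ^ 3 ∣ 2 ^ z := pow_dvd_pow 2 hz3
              simpa using this
            rcases (by omega : w % 2 = 0 ∨ w % 2 = 1) with hww | hww <;>
              rw [hww] at h8' <;> norm_num at h8' <;> omega
        obtain ⟨hz2, hwodd⟩ := hzw
        subst hz2
        rcases (by omega : n % 3 = 0 ∨ n % 3 = 1 ∨ n % 3 = 2) with h3n | h3n | h3n
        · have h3d : (3:ℕ) ∣ 1 + 2 ^ 2 + 3 ^ w := dvd_trans (by omega) D1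
          have h3p : (3:ℕ) ∣ 3 ^ w := dvd_pow_self 3 (by omega)
          have he : (2:ℕ) ^ 2 = 4 := by norm_num
          omega
        · have h3m : (3:ℕ) ∣ m := by omega
          have h3d : (3:ℕ) ∣ 2 ^ (x-1) + 1 := h3m.trans hCm
          have hp : 2 ^ (x-1) % 3 = 2 ^ ((x-1) % 2) % 3 := pow_mod_period 2 3 2 (by decide) (x-1)
          rw [(by omega : (x-1) % 2 = 0)] at hp
          norm_num at hp
          omega
        · have h3d : (3:ℕ) ∣ 2 ^ (w-1) + 1 := (by omega : (3:ℕ) ∣ n+1).trans hD2'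
          have hp : 2 ^ (w-1) % 3 = 2 ^ ((w-1) % 2) % 3 := pow_mod_period 2 3 2 (by decide) (w-1)
          rw [(by omega : (w-1) % 2 = 0)] at hp
          norm_num at hp
          omega
    · ------------------------------------------------------------------ n odd
      have hyeven : y % 2 = 0 := by
        by_contra hc
        have hyO : Odd y := Nat.odd_iff.mpr (by omega)
        rw [hyO.neg_one_pow] at H3
        have hzero : (-2 : ZMod (n+2)) ^ x = 0 := by linear_combination H3
        have h2z : ((2 ^ x : ℕ) : ZMod (n+2)) = 0 := by
          push_cast
          rcases Nat.even_or_odd x with hxe | hxo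
          · rw [hxe.neg_pow] at hzero
            exact hzero
          · rw [hxo.neg_pow] at hzero
            exact neg_eq_zero.mp hzero
        have hdvd : (n+2) ∣ 2 ^ x := (ZMod.natCast_eq_zero_iff _ _).mp h2z
        obtain ⟨t, _, hnt⟩ := (Nat.dvd_prime_pow Nat.prime_two).mp hdvd
        rcases Nat.eq_zero_or_pos t with h0 | h0
        · rw [h0] at hnt
          norm_num at hnt
          omega
        · have : 2 ∣ 2 ^ t := dvd_pow_self 2 (by omega)
          rw [← hnt] at this
          omega
      have hyE : Even y := Nat.even_iff.mpr hyeven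
      have hxodd : x % 2 = 1 := by
        by_contra hc
        have hxE : Even x := Nat.even_iff.mpr (by omega)
        rw [hxE.neg_one_pow] at H2
        have : ((2 ^ w : ℕ) : ZMod (n+1)) = 0 := by
          push_cast
          linear_combination -H2
        obtain ⟨s, _, hns⟩ :=
          (Nat.dvd_prime_pow Nat.prime_two).mp ((ZMod.natCast_eq_zero_iff _ _).mp this)
        have hs2 : 2 ≤ s := by
          by_contra hc2
          have hle : 2 ^ s ≤ 2 ^ 1 := Nat.pow_le_pow_right (by norm_num) (by omega)
          have he : (2:ℕ) ^ 1 = 2 := by norm_num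
          omega
        rw [hyE.neg_one_pow, hxE.neg_pow] at H3
        have h2s : (2 : ZMod (n+2)) ^ s = -1 := by
          have hcast : ((n + 1 : ℕ) : ZMod (n+2)) = -1 := by
            have h0 := ZMod.natCast_self (n+2)
            push_cast at h0
            push_cast
            linear_combination h0
          rw [hns] at hcast
          push_cast at hcast
          exact hcast
        haveI : NeZero (n+2) := ⟨by omega⟩
        have hunit : IsUnit (2 : ZMod (n+2)) := by
          have hco : Nat.Coprime 2 (n+2) :=
            (Nat.prime_two.coprime_iff_not_dvd).mpr (by omega)
          have := (ZMod.isUnit_iff_coprime 2 (n+2)).mpr hco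
          simpa using this
        have hps : (2 : ZMod (n+2)) ^ x = 2 * 2 ^ (x-1) := by
          rw [← pow_succ', (by omega : x - 1 + 1 = x)]
        rw [hps] at H3
        have h2x1 : (2 : ZMod (n+2)) ^ (x-1) = 1 :=
          hunit.mul_left_cancel (by rw [mul_one]; linear_combination H3)
        have hfinal : (-1 : ZMod (n+2)) ^ (x-1) = 1 := by
          calc (-1 : ZMod (n+2)) ^ (x-1) = ((2 : ZMod (n+2)) ^ s) ^ (x-1) := by rw [h2s]
            _ = ((2 : ZMod (n+2)) ^ (x-1)) ^ s := by
                rw [← pow_mul, mul_comm, pow_mul]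
            _ = 1 := by rw [h2x1, one_pow]
        have hx1odd : Odd (x-1) := Nat.odd_iff.mpr (by omega)
        rw [hx1odd.neg_one_pow] at hfinal
        have hz2 : ((2:ℕ) : ZMod (n+2)) = 0 := by
          push_cast
          linear_combination -hfinal
        have hdd := (ZMod.natCast_eq_zero_iff _ _).mp hz2
        have := Nat.le_of_dvd (by norm_num) hdd
        omega
      have hxO : Odd x := Nat.odd_iff.mpr hxodd
      have D2 : (n+1) ∣ 2 ^ w + 2 := by
        rw [hxO.neg_one_pow] at H2
        have : ((2 ^ w + 2 : ℕ) : ZMod (n+1)) = 0 := by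
          push_cast
          linear_combination -H2
        exact (ZMod.natCast_eq_zero_iff _ _).mp this
      rcases (by omega : w = 1 ∨ 2 ≤ w) with rfl | hw2
      · -- w = 1 : n = 3
        have hle4 : n + 1 ≤ 4 := Nat.le_of_dvd (by norm_num) (by norm_num at D2; exact D2)
        have hn3 : n = 3 := by omega
        subst hn3
        right
        norm_num at h
        obtain ⟨ex, ey, ez⟩ := case_n3 x y z (by omega) hy hz h
        simp [ex, ey, ez]
      · exfalso
        have hKe : 2 ^ (w-1) % 2 = 0 := by
          have : 2 ∣ 2 ^ (w-1) := dvd_pow_self 2 (by omega)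
          omega
        have hn41 : n % 4 = 1 := by
          rcases (by omega : n % 4 = 1 ∨ n % 4 = 3) with h1 | h3
          · exact h1
          · exfalso
            have h4 : (4:ℕ) ∣ n + 1 := by omega
            have h4d := h4.trans D2
            have h4x : (4:ℕ) ∣ 2 ^ w := by
              have : (2:ℕ) ^ 2 ∣ 2 ^ w := pow_dvd_pow 2 hw2
              simpa using this
            omega
        have hC2 : (n+2) ∣ 2 ^ x + 2 := by
          rw [hyE.neg_one_pow, Odd.neg_pow hxO] at H3
          have : ((2 ^ x + 2 : ℕ) : ZMod (n+2)) = 0 := by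
            push_cast
            linear_combination -H3
          exact (ZMod.natCast_eq_zero_iff _ _).mp this
        have hps2x := pow_succ 2 (x-1)
        rw [(by omega : x - 1 + 1 = x)] at hps2x
        have hCm : (n+2) ∣ 2 ^ (x-1) + 1 := by
          have h2x : 2 ^ x + 2 = 2 * (2 ^ (x-1) + 1) := by omega
          rw [h2x] at hC2
          have hco : Nat.Coprime (n+2) 2 := by
            rw [Nat.coprime_comm]
            exact (Nat.prime_two.coprime_iff_not_dvd).mpr (by omega)
          exact hco.dvd_of_dvd_mul_left hC2
        have hsq : 2 ^ (x-1) = (2 ^ ((x-1)/2)) ^ 2 := by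
          rw [← pow_mul]
          congr 1
          omega
        exact not_dvd_sq_add_one (n+2) (2 ^ ((x-1)/2)) (by omega) (hsq ▸ hCm)
  · rintro (h | h) <;>
    · simp only [Prod.mk.injEq] at h
      obtain ⟨rfl, rfl, rfl, rfl, rfl⟩ := h
      norm_num
end

section
/- For every integer n ≥ 4, the congruence n^x ≡ (n+1)^y + (n+2)^z + (n+3)^w (mod 12(n+1)(n+2)) has no solution in positive integers x, y, z, w. -/
private lemma exists_prime_mod4 : ∀ m : ℕ, m % 4 = 3 → ∃ p, p.Prime ∧ p ∣ m ∧ p % 4 = 3 := by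
  intro m
  induction m using Nat.strong_induction_on with
  | _ m ih =>
    intro hm
    obtain ⟨p, pp, pdvd⟩ := Nat.exists_prime_and_dvd (show m ≠ 1 by omega)
    obtain ⟨q, hq⟩ := pdvd
    have hpodd : p % 2 = 1 := by
      rcases pp.eq_two_or_odd with h | h
      · subst h; omega
      · exact h
    rcases (show p % 4 = 1 ∨ p % 4 = 3 by omega) with h1 | h3
    · have hq4 : q % 4 = 3 := by
        have := Nat.mul_mod p q 4
        rw [← hq, h1, hm] at this
        omega
      have hqlt : q < m := by
        have hp2 : 2 ≤ p := pp.two_le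
        have hq1 : 1 ≤ q := by
          rcases q with _ | q
          · omega
          · omega
        calc q < 2 * q := by omega
        _ ≤ p * q := Nat.mul_le_mul_right q hp2
        _ = m := hq.symm
      obtain ⟨r, rp, rdvd, r4⟩ := ih q hqlt hq4
      exact ⟨r, rp, hq ▸ Dvd.dvd.mul_left rdvd p, r4⟩
    · exact ⟨p, pp, ⟨q, hq⟩, h3⟩

private lemma sq_neg_one {m s : ℕ} (hm : m % 4 = 3) (h : m ∣ s * s + 1) : False := by
  obtain ⟨p, pp, pdvd, p3⟩ := exists_prime_mod4 m hm
  haveI : Fact p.Prime := ⟨pp⟩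
  have hd : p ∣ s * s + 1 := pdvd.trans h
  have h0 : ((s * s + 1 : ℕ) : ZMod p) = 0 := (ZMod.natCast_eq_zero_iff _ _).mpr hd
  push_cast at h0
  have hsq : IsSquare (-1 : ZMod p) := ⟨s, by linear_combination -h0⟩
  rw [ZMod.exists_sq_eq_neg_one_iff] at hsq
  exact hsq p3

private lemma odd_dvd_half {m k : ℕ} (hm : Odd m) (h : m ∣ 2 * k) : m ∣ k :=
  Nat.Coprime.dvd_of_dvd_mul_left (Nat.coprime_two_right.mpr hm) h

private lemma pow2_zmod8 (k : ℕ) : (2 : ZMod 8) ^ (k + 3) = 0 := by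
  rw [pow_add]
  have h : (2 : ZMod 8) ^ 3 = 0 := by decide
  rw [h, mul_zero]

private lemma pow_odd_exp {R : Type*} [Monoid R] {a : R} (h : a * a = 1) {e : ℕ} (he : Odd e) :
    a ^ e = a := by
  obtain ⟨m, rfl⟩ := he
  rw [pow_succ, pow_mul, (show a ^ 2 = 1 by rw [sq, h]), one_pow, one_mul]

private lemma pow_even_exp {R : Type*} [Monoid R] {a : R} (h : a * a = 1) {e : ℕ} (he : Even e) :
    a ^ e = 1 := by
  obtain ⟨m, rfl⟩ := he
  rw [← two_mul, pow_mul, (show a ^ 2 = 1 by rw [sq, h]), one_pow]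

private lemma pow26_8 {a : ZMod 8} (ha : a = 2 ∨ a = 6) {e : ℕ} (he : 2 ≤ e) :
    a ^ e = 4 ∨ a ^ e = 0 := by
  have h3 : a ^ 3 = 0 := by rcases ha with rfl | rfl <;> decide
  rcases e with _ | _ | _ | e3
  · omega
  · omega
  · left; rcases ha with rfl | rfl <;> decide
  · right; rw [(show e3+1+1+1 = e3+3 by omega), pow_add, h3, mul_zero]

theorem stmt_1 (n : ℕ) (hn : 4 ≤ n) (x y z w : ℕ)
    (hx : 1 ≤ x) (hy : 1 ≤ y) (hz : 1 ≤ z) (hw : 1 ≤ w) :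
    ¬ n ^ x ≡ (n + 1) ^ y + (n + 2) ^ z + (n + 3) ^ w [MOD 12 * (n + 1) * (n + 2)] := by
  intro h
  have key : ∀ d : ℕ, d ∣ 12 * (n + 1) * (n + 2) →
      ((n : ZMod d)) ^ x = ((n : ZMod d) + 1) ^ y + ((n : ZMod d) + 2) ^ z + ((n : ZMod d) + 3) ^ w := by
    intro d hd
    have h2 := (ZMod.natCast_eq_natCast_iff _ _ _).mpr (h.of_dvd hd)
    push_cast at h2
    exact h2
  have hdvd8 : (8 : ℕ) ∣ 12 * (n + 1) * (n + 2) := by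
    obtain ⟨k, hk⟩ := Nat.even_mul_succ_self (n + 1)
    exact ⟨3 * k, by rw [mul_assoc, (show (n+1) * (n+2) = (n+1) * (n+1+1) by ring), hk]; ring⟩
  have hdvd3 : (3 : ℕ) ∣ 12 * (n + 1) * (n + 2) := ⟨4 * (n + 1) * (n + 2), by ring⟩
  -- the congruence mod n+1 :  (-1)^x = 1 + 2^w
  have hA := key (n + 1) ⟨12 * (n + 2), by ring⟩
  have hA1 : ((n : ZMod (n + 1))) = -1 := by
    have h0 : ((n : ZMod (n + 1)) + 1) = 0 := by
      have := ZMod.natCast_self (n + 1)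
      push_cast at this
      exact this
    linear_combination h0
  rw [hA1] at hA
  norm_num at hA
  rw [zero_pow (by omega : y ≠ 0), zero_add] at hA
  -- hA : (-1) ^ x = 1 + 2 ^ w
  -- the congruence mod n+2 :  (-2)^x = (-1)^y + 1
  have hB := key (n + 2) ⟨12 * (n + 1), by ring⟩
  have hB1 : ((n : ZMod (n + 2))) = -2 := by
    have h0 : ((n : ZMod (n + 2)) + 2) = 0 := by
      have := ZMod.natCast_self (n + 2)
      push_cast at this
      exact this
    linear_combination h0
  rw [hB1] at hB
  norm_num at hB
  rw [zero_pow (by omega : z ≠ 0), add_zero] at hB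
  -- hB : (-2) ^ x = (-1) ^ y + 1
  have castA : ∀ m : ℕ, ((m : ℕ) : ZMod (n+1)) = 0 → (n+1) ∣ m :=
    fun m hm => (ZMod.natCast_eq_zero_iff m (n+1)).mp hm
  have castB : ∀ m : ℕ, ((m : ℕ) : ZMod (n+2)) = 0 → (n+2) ∣ m :=
    fun m hm => (ZMod.natCast_eq_zero_iff m (n+2)).mp hm
  rcases Nat.even_or_odd n with hne | hno
  · -- ============ n even ============
    have hAoddNat : Odd (n+1) := by rcases hne with ⟨k, hk⟩; exact ⟨k, by omega⟩
    have hxodd : Odd x := by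
      rcases Nat.even_or_odd x with hxe | hxo
      · exfalso
        rw [Even.neg_one_pow hxe] at hA
        have hdvd := castA (2^w) (by push_cast; linear_combination -hA)
        have := Nat.Coprime.eq_one_of_dvd ((Nat.coprime_two_right.mpr hAoddNat).pow_right w) hdvd
        omega
      · exact hxo
    rw [Odd.neg_one_pow hxodd] at hA
    have hdvdA2 : (n+1) ∣ 2^w + 2 := castA _ (by push_cast; linear_combination -hA)
    obtain ⟨w', rfl⟩ : ∃ w', w = w' + 1 := ⟨w - 1, by omega⟩
    have hAw : (n+1) ∣ 2^w' + 1 := odd_dvd_half hAoddNat (by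
      have h2 : 2^(w'+1) + 2 = 2*(2^w' + 1) := by rw [pow_succ]; ring
      rwa [h2] at hdvdA2)
    rcases Nat.even_or_odd y with hye | hyo
    · -- y even
      rw [Even.neg_one_pow hye] at hB
      have hdvdB2 : (n+2) ∣ 2^x + 2 := castB _ (by
        push_cast
        rw [Odd.neg_pow hxodd] at hB
        linear_combination -hB)
      obtain ⟨x', rfl⟩ : ∃ x', x = x' + 1 := ⟨x - 1, by omega⟩
      rcases (show n % 4 = 0 ∨ n % 4 = 2 by obtain ⟨m, hm⟩ := hne; omega) with h40 | h42
      · -- n ≡ 0 mod 4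
        obtain ⟨t, ht⟩ : ∃ t, n = 4 * t := ⟨n / 4, by omega⟩
        have hB2 : n + 2 = 2 * (2*t+1) := by omega
        have hBx : (2*t+1) ∣ 2^x' + 1 := by
          have h2 : 2^(x'+1) + 2 = 2 * (2^x' + 1) := by rw [pow_succ]; ring
          rw [hB2, h2] at hdvdB2
          exact (Nat.mul_dvd_mul_iff_left (by norm_num : 0 < 2)).mp hdvdB2
        have hx'e : Even x' := by rcases hxodd with ⟨m, hm⟩; exact ⟨m, by omega⟩
        obtain ⟨k, hk⟩ := hx'e
        have hBt4 : (2*t+1) % 4 = 1 := by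
          rcases (show (2*t+1) % 4 = 1 ∨ (2*t+1) % 4 = 3 by omega) with hh | hh
          · exact hh
          · exact absurd (sq_neg_one hh (by rw [hk, pow_add] at hBx; exact hBx)) not_false
        have hn8 : n % 8 = 0 := by omega
        -- mod 8 : forces z = 2 and w odd
        have h8 := key 8 hdvd8
        have hc8 : (n : ZMod 8) = 0 := by
          rw [← ZMod.natCast_mod n 8, hn8]; norm_num
        rw [hc8, zero_pow (by omega : x'+1 ≠ 0)] at h8
        have f1 : ((0:ZMod 8)+1) = 1 := by decide
        have f2 : ((0:ZMod 8)+2) = 2 := by decide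
        have f3 : ((0:ZMod 8)+3) = 3 := by decide
        rw [f1, f2, f3, one_pow] at h8
        have hwo : Odd (w'+1) := by
          rcases Nat.even_or_odd (w'+1) with hwe | hwo
          · exfalso
            rw [pow_even_exp (by decide : (3:ZMod 8)*(3:ZMod 8) = 1) hwe] at h8
            rcases z with _ | _ | _ | z3
            · omega
            · revert h8; decide
            · revert h8; decide
            · rw [(show z3+1+1+1 = z3+3 by omega), pow2_zmod8] at h8; revert h8; decide
          · exact hwo
        rw [pow_odd_exp (by decide : (3:ZMod 8)*(3:ZMod 8) = 1) hwo] at h8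
        have hz2 : z = 2 := by
          rcases z with _ | _ | _ | z3
          · omega
          · revert h8; decide
          · rfl
          · exact absurd (by rw [(show z3+1+1+1 = z3+3 by omega), pow2_zmod8] at h8; exact h8)
              (by decide)
        -- mod 3 endgame
        have h3m := key 3 hdvd3
        rcases (show n % 3 = 0 ∨ n % 3 = 1 ∨ n % 3 = 2 by omega) with h30 | h31 | h32
        · have hc : (n : ZMod 3) = 0 := by rw [← ZMod.natCast_mod n 3, h30]; norm_num
          have g1 : ((0:ZMod 3)+1) = 1 := by decide
          have g2 : ((0:ZMod 3)+2) = 2 := by decide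
          have g3 : ((0:ZMod 3)+3) = 0 := by decide
          rw [hc, zero_pow (by omega : x'+1 ≠ 0), g1, g2, g3, one_pow,
            zero_pow (by omega : w'+1 ≠ 0), hz2] at h3m
          revert h3m; decide
        · have hc : (n : ZMod 3) = 1 := by rw [← ZMod.natCast_mod n 3, h31]; norm_num
          have g1 : ((1:ZMod 3)+1) = 2 := by decide
          have g2 : ((1:ZMod 3)+2) = 0 := by decide
          have g3 : ((1:ZMod 3)+3) = 1 := by decide
          rw [hc, one_pow, g1, g2, g3, zero_pow (by omega : z ≠ 0), one_pow,
            pow_even_exp (by decide : (2:ZMod 3)*(2:ZMod 3) = 1) hye] at h3m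
          revert h3m; decide
        · have hc : (n : ZMod 3) = 2 := by rw [← ZMod.natCast_mod n 3, h32]; norm_num
          have g1 : ((2:ZMod 3)+1) = 0 := by decide
          have g2 : ((2:ZMod 3)+2) = 1 := by decide
          have g3 : ((2:ZMod 3)+3) = 2 := by decide
          rw [hc, g1, g2, g3, zero_pow (by omega : y ≠ 0), one_pow,
            pow_odd_exp (by decide : (2:ZMod 3)*(2:ZMod 3) = 1) hxodd,
            pow_odd_exp (by decide : (2:ZMod 3)*(2:ZMod 3) = 1) hwo] at h3m
          revert h3m; decide
      · -- n ≡ 2 mod 4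
        have h4B : (4:ℕ) ∣ n + 2 := by omega
        have h44 : (4:ℕ) ∣ 2^(x'+1) + 2 := h4B.trans hdvdB2
        rcases x' with _ | x''
        · have hle := Nat.le_of_dvd (by norm_num) hdvdB2
          norm_num at hle; omega
        · have he : (2:ℕ)^(x''+1+1) = 2^x'' * 4 := by rw [pow_add, pow_add]; ring
          omega
    · -- y odd
      rw [Odd.neg_one_pow hyo] at hB
      have h2x0 : (2 : ZMod (n+2))^x = 0 := by
        rw [Odd.neg_pow hxodd] at hB
        linear_combination -hB
      have hdvdBx : (n+2) ∣ 2^x := castB _ (by push_cast; exact h2x0)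
      obtain ⟨b, hbx, hb⟩ := (Nat.dvd_prime_pow Nat.prime_two).mp hdvdBx
      have hb3 : 3 ≤ b := by
        by_contra hc
        interval_cases b <;> norm_num at hb <;> omega
      have h2b1 : (2 : ZMod (n+1))^b = 1 := by
        have hh : ((2^b : ℕ) : ZMod (n+1)) = ((n+2 : ℕ) : ZMod (n+1)) := by rw [← hb]
        push_cast at hh
        rw [hh, hA1]
        norm_num
      have hw'neg : (2 : ZMod (n+1))^w' = -1 := by
        have h0 : ((2^w' + 1 : ℕ) : ZMod (n+1)) = 0 := (ZMod.natCast_eq_zero_iff _ _).mpr hAw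
        push_cast at h0
        linear_combination h0
      have h2r : (2 : ZMod (n+1))^(w' % b) = -1 := by
        conv at hw'neg => lhs; rw [← Nat.div_add_mod w' b]
        rwa [pow_add, pow_mul, h2b1, one_pow, one_mul] at hw'neg
      have hdvdr : (n+1) ∣ 2^(w' % b) + 1 := castA _ (by push_cast; linear_combination h2r)
      have hle := Nat.le_of_dvd (by positivity) hdvdr
      have hh1 : (2:ℕ)^(w' % b) ≤ 2^(b-1) := Nat.pow_le_pow_right (by norm_num)
        (by have := Nat.mod_lt w' (show 0 < b by omega); omega)
      have hh2 : (2:ℕ)^(b-1) * 2 = 2^b := by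
        rw [← pow_succ]; congr 1; omega
      have hh3 : (4:ℕ) ≤ 2^(b-1) := by
        calc (4:ℕ) = 2^2 := by norm_num
        _ ≤ 2^(b-1) := Nat.pow_le_pow_right (by norm_num) (by omega)
      omega
  · -- ============ n odd ============
    have hBoddNat : Odd (n+2) := by rcases hno with ⟨k, hk⟩; exact ⟨k+1, by omega⟩
    have hye : Even y := by
      rcases Nat.even_or_odd y with hye | hyo
      · exact hye
      · exfalso
        rw [Odd.neg_one_pow hyo] at hB
        have h2x0 : (2 : ZMod (n+2))^x = 0 := by
          rcases Nat.even_or_odd x with hxe | hxo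
          · rw [Even.neg_pow hxe] at hB; linear_combination hB
          · rw [Odd.neg_pow hxo] at hB; linear_combination -hB
        have hdvd := castB (2^x) (by push_cast; exact h2x0)
        have := Nat.Coprime.eq_one_of_dvd ((Nat.coprime_two_right.mpr hBoddNat).pow_right x) hdvd
        omega
    rw [Even.neg_one_pow hye] at hB
    rcases Nat.even_or_odd x with hxe | hxo
    · -- x even : n+1 = 2^a , contradiction mod n+2
      rw [Even.neg_one_pow hxe] at hA
      have hdvdA : (n+1) ∣ 2^w := castA _ (by push_cast; linear_combination -hA)
      obtain ⟨a, haw, ha⟩ := (Nat.dvd_prime_pow Nat.prime_two).mp hdvdA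
      rw [Even.neg_pow hxe] at hB
      have h2ne : (2 : ZMod (n+2)) ≠ 0 := by
        intro h0
        have hd2 : (n+2) ∣ 2 := castB 2 (by push_cast; exact h0)
        have := Nat.le_of_dvd (by norm_num) hd2
        omega
      obtain ⟨x', rfl⟩ : ∃ x', x = x' + 1 := ⟨x - 1, by omega⟩
      have h2u : IsUnit (2 : ZMod (n+2)) := by
        have := (ZMod.isUnit_iff_coprime 2 (n+2)).mpr (Nat.coprime_two_left.mpr hBoddNat)
        simpa using this
      have h2x1 : (2 : ZMod (n+2))^x' = 1 := by
        have hh : (2:ZMod (n+2)) * (2:ZMod (n+2))^x' = (2:ZMod (n+2)) * 1 := by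
          rw [mul_one, ← pow_succ']
          linear_combination hB
        exact h2u.mul_left_cancel hh
      have hx'odd : Odd x' := by rcases hxe with ⟨m, hm⟩; exact ⟨m-1, by omega⟩
      have h2a : (2 : ZMod (n+2))^a = -1 := by
        have hh : ((2^a : ℕ) : ZMod (n+2)) = ((n+1 : ℕ) : ZMod (n+2)) := by rw [← ha]
        push_cast at hh
        rw [hh, hB1]
        ring
      have hcontra : (1 : ZMod (n+2)) = -1 := by
        calc (1 : ZMod (n+2)) = ((2:ZMod (n+2))^x')^a := by rw [h2x1, one_pow]
        _ = ((2:ZMod (n+2))^a)^x' := by rw [← pow_mul, ← pow_mul, mul_comm]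
        _ = (-1)^x' := by rw [h2a]
        _ = -1 := Odd.neg_one_pow hx'odd
      exact h2ne (by linear_combination hcontra)
    · -- x odd
      rw [Odd.neg_one_pow hxo] at hA
      have hdvdA2 : (n+1) ∣ 2^w + 2 := castA _ (by push_cast; linear_combination -hA)
      rw [Odd.neg_pow hxo] at hB
      have hdvdB2 : (n+2) ∣ 2^x + 2 := castB _ (by push_cast; linear_combination -hB)
      obtain ⟨w', rfl⟩ : ∃ w', w = w' + 1 := ⟨w - 1, by omega⟩
      obtain ⟨x', rfl⟩ : ∃ x', x = x' + 1 := ⟨x - 1, by omega⟩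
      rcases (show n % 4 = 1 ∨ n % 4 = 3 by obtain ⟨m, hm⟩ := hno; omega) with h41 | h43
      · -- n ≡ 1 mod 4
        obtain ⟨t, ht⟩ : ∃ t, n = 4*t+1 := ⟨n/4, by omega⟩
        have hA2 : n + 1 = 2 * (2*t+1) := by omega
        have hAw : (2*t+1) ∣ 2^w' + 1 := by
          have h2 : 2^(w'+1) + 2 = 2*(2^w'+1) := by rw [pow_succ]; ring
          rw [hA2, h2] at hdvdA2
          exact (Nat.mul_dvd_mul_iff_left (by norm_num : 0 < 2)).mp hdvdA2
        have hw'1 : 1 ≤ w' := by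
          by_contra hc
          have hw0 : w' = 0 := by omega
          rw [hw0] at hAw
          norm_num at hAw
          have := Nat.le_of_dvd (by norm_num) hAw
          omega
        have hBx : (n+2) ∣ 2^x' + 1 := odd_dvd_half hBoddNat (by
          have h2 : 2^(x'+1) + 2 = 2*(2^x'+1) := by rw [pow_succ]; ring
          rwa [h2] at hdvdB2)
        have hx'e : Even x' := by rcases hxo with ⟨m, hm⟩; exact ⟨m, by omega⟩
        obtain ⟨k, hk⟩ := hx'e
        have hy2 : 2 ≤ y := by rcases hye with ⟨m, hm⟩; omega
        rcases (show n % 3 = 0 ∨ n % 3 = 1 ∨ n % 3 = 2 by omega) with h30 | h31 | h32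
        · -- n ≡ 0 mod 3 : need z even via mod 8
          have hze : Even z := by
            by_contra hzc
            have hzo : Odd z := Nat.not_even_iff_odd.mp hzc
            have h8 := key 8 hdvd8
            have h4w : (2:ZMod 8)^(w'+1) = 0 ∨ True := Or.inr trivial
            rcases (show n % 8 = 1 ∨ n % 8 = 5 by omega) with h81 | h85
            · have hc : (n : ZMod 8) = 1 := by rw [← ZMod.natCast_mod n 8, h81]; norm_num
              have f2 : ((1:ZMod 8)+1) = 2 := by decide
              have f3 : ((1:ZMod 8)+2) = 3 := by decide
              have f4 : ((1:ZMod 8)+3) = 4 := by decide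
              rw [hc, one_pow, f2, f3, f4,
                pow_odd_exp (by decide : (3:ZMod 8)*(3:ZMod 8) = 1) hzo] at h8
              have h4w : (4:ZMod 8)^(w'+1) = 0 := by
                obtain ⟨w'', rfl⟩ : ∃ w'', w' = w'' + 1 := ⟨w' - 1, by omega⟩
                rw [(show w''+1+1 = w''+2 by omega), pow_add]
                have : (4:ZMod 8)^2 = 0 := by decide
                rw [this, mul_zero]
              rw [h4w] at h8
              rcases pow26_8 (Or.inl rfl) hy2 with h2y | h2y <;> rw [h2y] at h8 <;>
                revert h8 <;> decide
            · have hc : (n : ZMod 8) = 5 := by rw [← ZMod.natCast_mod n 8, h85]; norm_num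
              have f2 : ((5:ZMod 8)+1) = 6 := by decide
              have f3 : ((5:ZMod 8)+2) = 7 := by decide
              have f4 : ((5:ZMod 8)+3) = 0 := by decide
              rw [hc, f2, f3, f4,
                pow_odd_exp (by decide : (5:ZMod 8)*(5:ZMod 8) = 1) hxo,
                pow_odd_exp (by decide : (7:ZMod 8)*(7:ZMod 8) = 1) hzo,
                zero_pow (by omega : w'+1 ≠ 0)] at h8
              rcases pow26_8 (Or.inr rfl) hy2 with h2y | h2y <;> rw [h2y] at h8 <;>
                revert h8 <;> decide
          have h3m := key 3 hdvd3
          have hc : (n : ZMod 3) = 0 := by rw [← ZMod.natCast_mod n 3, h30]; norm_num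
          have g1 : ((0:ZMod 3)+1) = 1 := by decide
          have g2 : ((0:ZMod 3)+2) = 2 := by decide
          have g3 : ((0:ZMod 3)+3) = 0 := by decide
          rw [hc, zero_pow (by omega : x'+1 ≠ 0), g1, g2, g3, one_pow,
            zero_pow (by omega : w'+1 ≠ 0),
            pow_even_exp (by decide : (2:ZMod 3)*(2:ZMod 3) = 1) hze] at h3m
          revert h3m; decide
        · have h3m := key 3 hdvd3
          have hc : (n : ZMod 3) = 1 := by rw [← ZMod.natCast_mod n 3, h31]; norm_num
          have g1 : ((1:ZMod 3)+1) = 2 := by decide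
          have g2 : ((1:ZMod 3)+2) = 0 := by decide
          have g3 : ((1:ZMod 3)+3) = 1 := by decide
          rw [hc, one_pow, g1, g2, g3, zero_pow (by omega : z ≠ 0), one_pow,
            pow_even_exp (by decide : (2:ZMod 3)*(2:ZMod 3) = 1) hye] at h3m
          revert h3m; decide
        · -- n ≡ 2 mod 3 : quadratic residue contradiction mod n+2
          have hB4 : (n+2) % 4 = 3 := by omega
          exact sq_neg_one hB4 (by rw [hk, pow_add] at hBx; exact hBx)
      · -- n ≡ 3 mod 4
        have h4A : (4:ℕ) ∣ n + 1 := by omega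
        have h44 : (4:ℕ) ∣ 2^(w'+1) + 2 := h4A.trans hdvdA2
        rcases w' with _ | w''
        · have hle := Nat.le_of_dvd (by norm_num) hdvdA2
          norm_num at hle; omega
        · have he : (2:ℕ)^(w''+1+1) = 2^w'' * 4 := by rw [pow_add, pow_add]; ring
          omega
end

section
/- For every integer n ≥ 4, the equation n^x = (n+1)^y + (n+2)^z + (n+3)^w has no solution in positive integers x, y, z, w. -/
lemma pow_cycle {R : Type*} [Monoid R] (a : R) {p : ℕ} (h : a ^ p = 1) (e : ℕ) :
    a ^ e = a ^ (e % p) := by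
  conv_lhs => rw [← Nat.div_add_mod e p]
  rw [pow_add, pow_mul, h, one_pow, one_mul]

lemma qr4 : ∀ m : ℕ, Odd m → ∀ t : ℕ, m ∣ t ^ 2 + 1 → m % 4 = 1 := by
  intro m
  induction m using Nat.strong_induction_on with
  | _ m ih =>
    intro hm t hdvd
    rcases eq_or_ne m 1 with rfl | hm1
    · rfl
    · have hm0 : m ≠ 0 := by rintro rfl; simp [Nat.odd_iff] at hm
      obtain ⟨p, hpm, hpp, hp4⟩ : ∃ p, p ∣ m ∧ p.Prime ∧ p % 4 = 1 := by
        have hpp : m.minFac.Prime := Nat.minFac_prime hm1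
        have hpm : m.minFac ∣ m := Nat.minFac_dvd m
        have hpodd : m.minFac ≠ 2 := by
          rintro h2
          have : (2 : ℕ) ∣ m := h2 ▸ hpm
          rw [Nat.odd_iff] at hm; omega
        haveI : Fact m.minFac.Prime := ⟨hpp⟩
        refine ⟨m.minFac, hpm, hpp, ?_⟩
        have hsq : IsSquare (-1 : ZMod m.minFac) := by
          refine ⟨(t : ZMod m.minFac), ?_⟩
          have h0 : ((t ^ 2 + 1 : ℕ) : ZMod m.minFac) = 0 := by
            rw [ZMod.natCast_eq_zero_iff]
            exact hpm.trans hdvd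
          push_cast at h0
          linear_combination -h0
        have h3 := ZMod.exists_sq_eq_neg_one_iff.mp hsq
        have := hpp.two_le
        have hodd : m.minFac % 2 = 1 := Nat.odd_iff.mp (hpp.odd_of_ne_two hpodd)
        omega
      obtain ⟨m', rfl⟩ := hpm
      have hm'odd : Odd m' := by
        rw [Nat.odd_iff] at hm ⊢
        have h2 : (p * m') % 2 = p % 2 * (m' % 2) % 2 := Nat.mul_mod p m' 2
        have hps : p % 2 = 1 := by omega
        rw [hps, one_mul] at h2
        omega
      have hm'0 : m' ≠ 0 := by rintro rfl; exact hm0 (mul_zero p)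
      have hm'lt : m' < p * m' :=
        lt_of_eq_of_lt (one_mul m').symm
          ((Nat.mul_lt_mul_right (Nat.pos_of_ne_zero hm'0)).mpr hpp.one_lt)
      have hm'dvd : m' ∣ t ^ 2 + 1 := (dvd_mul_left m' p).trans hdvd
      have hm'4 := ih m' hm'lt hm'odd t hm'dvd
      rw [Nat.mul_mod, hp4, hm'4]

lemma stmt_2_aux (n : ℕ) (hn : 4 ≤ n) (x y z w : ℕ)
    (hx : 1 ≤ x) (hy : 1 ≤ y) (hz : 1 ≤ z) (hw : 1 ≤ w)
    (h : n ^ x = (n + 1) ^ y + (n + 2) ^ z + (n + 3) ^ w) : False := by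
  have hx0 : x ≠ 0 := by omega
  have hy0 : y ≠ 0 := by omega
  have hz0 : z ≠ 0 := by omega
  have hw0 : w ≠ 0 := by omega
  -- x ≥ 2
  have hx2 : 2 ≤ x := by
    by_contra hlt
    have hx1 : x = 1 := by omega
    have b1 : n + 1 ≤ (n+1)^y := Nat.le_self_pow hy0 _
    have b2 : n + 2 ≤ (n+2)^z := Nat.le_self_pow hz0 _
    have b3 : n + 3 ≤ (n+3)^w := Nat.le_self_pow hw0 _
    rw [hx1, pow_one] at h
    omega
  -- key congruence mod n+1 : (-1)^x = 1 + 2^w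
  have key1 : ((-1 : ZMod (n+1)))^x = 1 + 2^w := by
    have hn1 : ((n : ℕ) : ZMod (n+1)) = -1 := by
      have h0 : ((n+1 : ℕ) : ZMod (n+1)) = 0 := ZMod.natCast_self _
      push_cast at h0
      linear_combination h0
    have hcast := congrArg (fun t : ℕ => (t : ZMod (n+1))) h
    push_cast at hcast
    rw [hn1] at hcast
    have e0 : ((-1 : ZMod (n+1)) + 1) = 0 := by ring
    have e1 : ((-1 : ZMod (n+1)) + 2) = 1 := by ring
    have e2 : ((-1 : ZMod (n+1)) + 3) = 2 := by ring
    rw [e0, e1, e2, zero_pow hy0, one_pow, zero_add] at hcast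
    exact hcast
  -- key congruence mod n+2 : (-2)^x = (-1)^y + 1
  have key2 : ((-2 : ZMod (n+2)))^x = (-1)^y + 1 := by
    have hn2 : ((n : ℕ) : ZMod (n+2)) = -2 := by
      have h0 : ((n+2 : ℕ) : ZMod (n+2)) = 0 := ZMod.natCast_self _
      push_cast at h0
      linear_combination h0
    have hcast := congrArg (fun t : ℕ => (t : ZMod (n+2))) h
    push_cast at hcast
    rw [hn2] at hcast
    have e0 : ((-2 : ZMod (n+2)) + 1) = -1 := by ring
    have e1 : ((-2 : ZMod (n+2)) + 2) = 0 := by ring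
    have e2 : ((-2 : ZMod (n+2)) + 3) = 1 := by ring
    rw [e0, e1, e2, zero_pow hz0, one_pow, add_zero] at hcast
    exact hcast
  -- Step B : x is odd
  have hxodd : Odd x := by
    by_contra hxe
    rw [Nat.not_odd_iff_even] at hxe
    have h2w0 : (2 : ZMod (n+1))^w = 0 := by
      have hp : ((-1 : ZMod (n+1)))^x = 1 := Even.neg_one_pow hxe
      linear_combination hp - key1
    have hdvd : (n+1) ∣ 2^w := by
      have hcc : ((2^w : ℕ) : ZMod (n+1)) = 0 := by push_cast; exact h2w0
      exact (ZMod.natCast_eq_zero_iff _ _).mp hcc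
    obtain ⟨a, haw, ha⟩ := (Nat.dvd_prime_pow Nat.prime_two).mp hdvd
    have ha3 : 3 ≤ a := by
      by_contra hlt
      interval_cases a <;> simp_all <;> omega
    -- (2 : ZMod (n+2))^a = -1  since n+2 = 2^a + 1
    have hna : (2 : ZMod (n+2))^a = -1 := by
      have h0 : ((n+2 : ℕ) : ZMod (n+2)) = 0 := ZMod.natCast_self _
      have h1 : ((2^a : ℕ) : ZMod (n+2)) = ((n+1 : ℕ) : ZMod (n+2)) := by rw [← ha]
      push_cast at h0 h1
      linear_combination h1 + h0
    rcases Nat.even_or_odd y with hye | hyo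
    · -- y even :  2^x = 2  mod n+2 ; then 1 = -1
      have k2 : (2 : ZMod (n+2))^x = 2 := by
        have e := key2
        rw [Even.neg_one_pow hye, Even.neg_pow hxe] at e
        linear_combination e
      have hone : (-1 : ZMod (n+2)) = 1 := by
        have c3 : ((2:ZMod (n+2))^x)^a = ((2:ZMod (n+2))^a)^x := by
          rw [← pow_mul, ← pow_mul, mul_comm]
        rw [k2, hna, Even.neg_one_pow hxe] at c3
        exact c3
      have hcc : ((2:ℕ) : ZMod (n+2)) = 0 := by push_cast; linear_combination -hone
      have hd := (ZMod.natCast_eq_zero_iff _ _).mp hcc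
      have := Nat.le_of_dvd (by norm_num) hd
      omega
    · -- y odd : n+2 ∣ 2^x, so n+2 is a power of two, but n+2 = 2^a+1 is odd
      have k2 : (2 : ZMod (n+2))^x = 0 := by
        have e := key2
        rw [Odd.neg_one_pow hyo, Even.neg_pow hxe] at e
        linear_combination e
      have hdvd2 : (n+2) ∣ 2^x := by
        have hcc : ((2^x : ℕ) : ZMod (n+2)) = 0 := by push_cast; exact k2
        exact (ZMod.natCast_eq_zero_iff _ _).mp hcc
      obtain ⟨b, hbx, hb⟩ := (Nat.dvd_prime_pow Nat.prime_two).mp hdvd2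
      have hb0 : b ≠ 0 := by rintro rfl; rw [pow_zero] at hb; omega
      have h2b : 2 ∣ 2^b := dvd_pow_self 2 hb0
      have h2a : 2 ∣ 2^a := dvd_pow_self 2 (by omega)
      omega
  -- divisibility from mod n+1 with x odd :  n+1 ∣ 2^w + 2
  have hdvd1 : (n+1) ∣ 2^w + 2 := by
    have e := key1
    rw [Odd.neg_one_pow hxodd] at e
    have hcc : ((2^w + 2 : ℕ) : ZMod (n+1)) = 0 := by push_cast; linear_combination -e
    exact (ZMod.natCast_eq_zero_iff _ _).mp hcc
  -- Step C : y is even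
  have hyeven : Even y := by
    by_contra hyo'
    rw [Nat.not_even_iff_odd] at hyo'
    have k2 : (2 : ZMod (n+2))^x = 0 := by
      have e := key2
      rw [Odd.neg_one_pow hyo', Odd.neg_pow hxodd] at e
      linear_combination -e
    have hdvd2 : (n+2) ∣ 2^x := by
      have hcc : ((2^x : ℕ) : ZMod (n+2)) = 0 := by push_cast; exact k2
      exact (ZMod.natCast_eq_zero_iff _ _).mp hcc
    obtain ⟨b, hbx, hb⟩ := (Nat.dvd_prime_pow Nat.prime_two).mp hdvd2
    have hb3 : 3 ≤ b := by
      by_contra hlt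
      interval_cases b <;> simp_all <;> omega
    -- in ZMod (n+1) : 2^b = 1
    have h2b1 : (2 : ZMod (n+1))^b = 1 := by
      have h0 : ((n+1 : ℕ) : ZMod (n+1)) = 0 := ZMod.natCast_self _
      have h1 : ((2^b : ℕ) : ZMod (n+1)) = ((n+2 : ℕ) : ZMod (n+1)) := by rw [← hb]
      push_cast at h0 h1
      linear_combination h1 + h0
    have hcyc := pow_cycle (2 : ZMod (n+1)) h2b1 w
    have hdvd1' : (n+1) ∣ 2^(w % b) + 2 := by
      have hcc0 : ((2^w + 2 : ℕ) : ZMod (n+1)) = 0 :=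
        (ZMod.natCast_eq_zero_iff _ _).mpr hdvd1
      have hcc : ((2^(w % b) + 2 : ℕ) : ZMod (n+1)) = 0 := by
        push_cast at hcc0 ⊢
        rw [← hcyc]
        exact hcc0
      exact (ZMod.natCast_eq_zero_iff _ _).mp hcc
    have hlt : w % b < b := Nat.mod_lt _ (by omega)
    have hle : 2^(w % b) ≤ 2^(b-1) := Nat.pow_le_pow_right (by norm_num) (by omega)
    have hledvd := Nat.le_of_dvd (by positivity) hdvd1'
    have hsplit : 2^b = 2 * 2^(b-1) := by
      rw [← pow_succ']
      congr 1
      omega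
    have h2bm1 : (4:ℕ) ≤ 2^(b-1) := by
      calc (4:ℕ) = 2^2 := by norm_num
      _ ≤ 2^(b-1) := Nat.pow_le_pow_right (by norm_num) (by omega)
    omega
  -- divisibility from mod n+2 with x odd, y even : n+2 ∣ 2^x + 2
  have hdvd2 : (n+2) ∣ 2^x + 2 := by
    have e := key2
    rw [Even.neg_one_pow hyeven, Odd.neg_pow hxodd] at e
    have hcc : ((2^x + 2 : ℕ) : ZMod (n+2)) = 0 := by push_cast; linear_combination -e
    exact (ZMod.natCast_eq_zero_iff _ _).mp hcc
  -- Step E : 8 ∣ n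
  obtain ⟨k, hk⟩ := hxodd
  have hk1 : 1 ≤ k := by omega
  have hfac : 2^x + 2 = 2 * ((2^k)^2 + 1) := by
    have hpow : (2:ℕ)^x = 2^k * 2^k * 2 := by
      rw [hk, pow_succ, two_mul, pow_add]
    rw [hpow]
    ring
  have h2k : 2 ∣ 2^k := dvd_pow_self 2 (by omega)
  have hsodd : ((2^k)^2 + 1) % 2 = 1 := by
    obtain ⟨c, hc⟩ := h2k
    rw [hc]
    have : (2*c)^2 = 2*(2*c*c) := by ring
    omega
  rw [hfac] at hdvd2
  -- n is even
  have hneven : n % 2 = 0 := by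
    by_contra hno
    have hn2odd : Odd (n+2) := by rw [Nat.odd_iff]; omega
    have hcop : Nat.Coprime (n+2) 2 := by
      exact hn2odd.coprime_two_right
    have hdvds : (n+2) ∣ (2^k)^2 + 1 := hcop.dvd_of_dvd_mul_left hdvd2
    have h41 : (n+2) % 4 = 1 := qr4 _ hn2odd _ hdvds
    -- so 4 ∣ n+1 ; but n+1 ∣ 2^w + 2
    rcases eq_or_ne w 1 with rfl | hw1
    · have := Nat.le_of_dvd (by norm_num) hdvd1
      norm_num at this
      omega
    · have hw2 : 2 ≤ w := by omega
      have hfacw : 2^w + 2 = 2 * (2^(w-1) + 1) := by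
        have hpw : (2:ℕ)^w = 2^(w-1) * 2 := by
          rw [← pow_succ]
          congr 1
          omega
        rw [hpw]
        ring
      have huodd : (2^(w-1) + 1) % 2 = 1 := by
        have h2w : 2 ∣ 2^(w-1) := dvd_pow_self 2 (by omega)
        obtain ⟨c, hc⟩ := h2w
        omega
      have h4 : 4 ∣ n + 1 := by omega
      have h4d : 4 ∣ 2 * (2^(w-1) + 1) := h4.trans (hfacw ▸ hdvd1)
      omega
  -- 4 ∣ n
  have h4n : n % 4 = 0 := by
    by_contra hne
    have h4 : 4 ∣ n + 2 := by omega
    have h4d : 4 ∣ 2 * ((2^k)^2 + 1) := h4.trans hdvd2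
    omega
  -- n + 2 = 2 * m with m odd, m ∣ (2^k)^2+1
  have hmodd : Odd ((n+2)/2) := by rw [Nat.odd_iff]; omega
  have hmdvd : (n+2)/2 ∣ (2^k)^2 + 1 := by
    have h2 : 2 * ((n+2)/2) ∣ 2 * ((2^k)^2 + 1) := by
      have : 2 * ((n+2)/2) = n + 2 := by omega
      rw [this]
      exact hdvd2
    exact (Nat.mul_dvd_mul_iff_left (by norm_num : 0 < 2)).mp h2
  have hm4 := qr4 _ hmodd _ hmdvd
  have h8n : (8:ℕ) ∣ n := by omega
  -- Step F : mod 8 forces z = 2 and w odd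
  have hc8 : (0 : ZMod 8) = 1 + 2^z + 3^w := by
    have hcast := congrArg (fun t : ℕ => (t : ZMod 8)) h
    push_cast at hcast
    have hn0 : ((n : ℕ) : ZMod 8) = 0 := (ZMod.natCast_eq_zero_iff _ _).mpr h8n
    rw [hn0] at hcast
    simpa [zero_pow hx0, zero_pow hy0] using hcast
  have h3sq : (3 : ZMod 8)^2 = 1 := by decide
  have hw3 : (3 : ZMod 8)^w = 3^(w % 2) := pow_cycle _ h3sq w
  rw [hw3] at hc8
  have hwp : w % 2 = 0 ∨ w % 2 = 1 := by omega
  have hzw : z = 2 ∧ w % 2 = 1 := by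
    rcases Nat.lt_or_ge z 3 with hz3 | hz3
    · interval_cases z
      · rcases hwp with hwp | hwp <;> rw [hwp] at hc8 <;>
          exact absurd hc8 (by decide)
      · rcases hwp with hwp | hwp
        · rw [hwp] at hc8
          exact absurd hc8 (by decide)
        · exact ⟨rfl, hwp⟩
    · have h2z : (2 : ZMod 8)^z = 0 := by
        have : z = 3 + (z - 3) := by omega
        rw [this, pow_add]
        have : (2 : ZMod 8)^3 = 0 := by decide
        rw [this, zero_mul]
      rw [h2z] at hc8
      rcases hwp with hwp | hwp <;> rw [hwp] at hc8 <;>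
        exact absurd hc8 (by decide)
  obtain ⟨hz2, hwodd⟩ := hzw
  -- Step G : mod 3 contradiction
  have hcast3 := congrArg (fun t : ℕ => (t : ZMod 3)) h
  push_cast at hcast3
  have hn3cast : ((n % 3 : ℕ) : ZMod 3) = (n : ZMod 3) := ZMod.natCast_mod n 3
  have h2sq3 : (2 : ZMod 3)^2 = 1 := by decide
  have hn3 : n % 3 = 0 ∨ n % 3 = 1 ∨ n % 3 = 2 := by omega
  rcases hn3 with h3 | h3 | h3 <;> rw [h3] at hn3cast <;> push_cast at hn3cast <;>
    rw [← hn3cast] at hcast3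
  · -- n ≡ 0 : 0 = 1 + 2^2 + 0 = 2
    rw [hz2] at hcast3
    have e1 : ((0 : ZMod 3) + 1) = 1 := by decide
    have e2 : ((0 : ZMod 3) + 2) = 2 := by decide
    have e3 : ((0 : ZMod 3) + 3) = 0 := by decide
    rw [e1, e2, e3, zero_pow hx0, zero_pow hw0, one_pow] at hcast3
    exact absurd hcast3 (by decide)
  · -- n ≡ 1 : 1 = 2^y + 0 + 1, y even
    have e1 : ((1 : ZMod 3) + 1) = 2 := by decide
    have e2 : ((1 : ZMod 3) + 2) = 0 := by decide
    have e3 : ((1 : ZMod 3) + 3) = 1 := by decide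
    rw [e1, e2, e3, zero_pow hz0, one_pow, one_pow] at hcast3
    have hy2 : (2 : ZMod 3)^y = 1 := by
      rw [pow_cycle _ h2sq3 y, Nat.even_iff.mp hyeven, pow_zero]
    rw [hy2] at hcast3
    exact absurd hcast3 (by decide)
  · -- n ≡ 2 : 2^x = 0 + 1 + 2^w , x odd, w odd
    have e1 : ((2 : ZMod 3) + 1) = 0 := by decide
    have e2 : ((2 : ZMod 3) + 2) = 1 := by decide
    have e3 : ((2 : ZMod 3) + 3) = 2 := by decide
    rw [e1, e2, e3, zero_pow hy0, one_pow] at hcast3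
    have hxx : (2 : ZMod 3)^x = 2 := by
      rw [pow_cycle _ h2sq3 x, hk]
      have hm1 : (2 * k + 1) % 2 = 1 := by omega
      rw [hm1, pow_one]
    have hww : (2 : ZMod 3)^w = 2 := by
      rw [pow_cycle _ h2sq3 w, hwodd, pow_one]
    rw [hxx, hww] at hcast3
    exact absurd hcast3 (by decide)

theorem stmt_2 (n : ℕ) (hn : 4 ≤ n) (x y z w : ℕ)
    (hx : 1 ≤ x) (hy : 1 ≤ y) (hz : 1 ≤ z) (hw : 1 ≤ w) :
    n ^ x ≠ (n + 1) ^ y + (n + 2) ^ z + (n + 3) ^ w := by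
  intro h
  exact stmt_2_aux n hn x y z w hx hy hz hw h
end

section
/- The only solution in positive integers (x, y, z, w) to 2^x = 3^y + 4^z + 5^w is (x,y,z,w) = (5,1,1,2). -/
lemma powc (a p m : ℕ) (hm : 1 < m) (hp : a ^ p % m = 1) (n : ℕ) :
    a ^ n % m = a ^ (n % p) % m := by
  conv_lhs => rw [← Nat.div_add_mod n p]
  rw [pow_add, pow_mul, Nat.mul_mod, Nat.pow_mod, hp, one_pow,
      Nat.one_mod_eq_one.mpr (by omega), one_mul, Nat.mod_mod]

lemma sum_mod (m a b c : ℕ) : (a + b + c) % m = (a % m + b % m + c % m) % m := by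
  rw [Nat.add_mod, Nat.add_mod a b, Nat.mod_add_mod]

theorem stmt_3 (x y z w : ℕ) (hx : 1 ≤ x) (hy : 1 ≤ y) (hz : 1 ≤ z) (hw : 1 ≤ w) :
    2 ^ x = 3 ^ y + 4 ^ z + 5 ^ w ↔ (x, y, z, w) = (5, 1, 1, 2) := by
  constructor
  · intro h
    have h3 : 3 ≤ 3 ^ y := Nat.le_self_pow (by omega) 3
    have h4 : 4 ≤ 4 ^ z := Nat.le_self_pow (by omega) 4
    have h5 : 5 ≤ 5 ^ w := Nat.le_self_pow (by omega) 5
    have hx4 : 4 ≤ x := by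
      by_contra hc
      push_neg at hc
      interval_cases x <;> omega
    -- mod 3 : x odd, w even
    have h3y3 : 3 ^ y % 3 = 0 := by simp [Nat.pow_mod, zero_pow (show y ≠ 0 by omega)]
    have h4z3 : 4 ^ z % 3 = 1 := by simp [Nat.pow_mod]
    have e3 : 2 ^ x % 3 = (3 ^ y + 4 ^ z + 5 ^ w) % 3 := by rw [h]
    rw [powc 2 2 3 (by norm_num) (by norm_num), sum_mod, h3y3, h4z3,
        powc 5 2 3 (by norm_num) (by norm_num)] at e3
    have s1 : x % 2 = 1 ∧ w % 2 = 0 := by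
      have hx2 : x % 2 = 0 ∨ x % 2 = 1 := by omega
      have hw2 : w % 2 = 0 ∨ w % 2 = 1 := by omega
      rcases hx2 with h1 | h1 <;> rcases hw2 with h2 | h2 <;>
        rw [h1, h2] at e3 <;> norm_num at e3
      exact ⟨h1, h2⟩
    obtain ⟨s1, s2⟩ := s1
    -- mod 8 : z = 1 and y odd
    have e2x8 : 2 ^ x % 8 = 0 := by
      have : (2:ℕ) ^ 3 ∣ 2 ^ x := pow_dvd_pow 2 (by omega)
      norm_num at this
      omega
    have hz1 : z = 1 := by
      by_contra hzc
      have hz2 : 2 ≤ z := by omega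
      have h48 : 4 ^ z % 8 = 0 := by
        have h1 : (4:ℕ) ^ 2 ∣ 4 ^ z := pow_dvd_pow 4 hz2
        have h2 : (8:ℕ) ∣ 4 ^ z := dvd_trans (by norm_num) h1
        omega
      have e8 : 2 ^ x % 8 = (3 ^ y + 4 ^ z + 5 ^ w) % 8 := by rw [h]
      rw [e2x8, sum_mod, powc 3 2 8 (by norm_num) (by norm_num),
          powc 5 2 8 (by norm_num) (by norm_num), h48] at e8
      have hy2 : y % 2 = 0 ∨ y % 2 = 1 := by omega
      rcases hy2 with h1 | h1 <;> rw [h1, s2] at e8 <;> norm_num at e8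
    subst hz1
    have e8 : 2 ^ x % 8 = (3 ^ y + 4 ^ 1 + 5 ^ w) % 8 := by rw [h]
    rw [e2x8, sum_mod, powc 3 2 8 (by norm_num) (by norm_num),
        powc 5 2 8 (by norm_num) (by norm_num)] at e8
    have s3 : y % 2 = 1 := by
      have hy2 : y % 2 = 0 ∨ y % 2 = 1 := by omega
      rcases hy2 with h1 | h1 <;> rw [h1, s2] at e8 <;> norm_num at e8
      exact h1
    -- mod 16
    have e2x16 : 2 ^ x % 16 = 0 := by
      have : (2:ℕ) ^ 4 ∣ 2 ^ x := pow_dvd_pow 2 hx4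
      norm_num at this
      omega
    have e16 : 2 ^ x % 16 = (3 ^ y + 4 ^ 1 + 5 ^ w) % 16 := by rw [h]
    rw [e2x16, sum_mod, powc 3 4 16 (by norm_num) (by norm_num),
        powc 5 4 16 (by norm_num) (by norm_num)] at e16
    have s4 : y % 4 = 1 ∧ w % 4 = 2 ∨ y % 4 = 3 ∧ w % 4 = 0 := by
      have hy4 : y % 4 = 1 ∨ y % 4 = 3 := by omega
      have hw4 : w % 4 = 0 ∨ w % 4 = 2 := by omega
      rcases hy4 with h1 | h1 <;> rcases hw4 with h2 | h2 <;>
        rw [h1, h2] at e16 <;> norm_num at e16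
      · exact Or.inl ⟨h1, h2⟩
      · exact Or.inr ⟨h1, h2⟩
    -- mod 5 : x%4 = 1, y%4 = 1, hence w%4 = 2
    have h5w : 5 ^ w % 5 = 0 := by simp [Nat.pow_mod, zero_pow (show w ≠ 0 by omega)]
    have e5 : 2 ^ x % 5 = (3 ^ y + 4 ^ 1 + 5 ^ w) % 5 := by rw [h]
    rw [powc 2 4 5 (by norm_num) (by norm_num), sum_mod,
        powc 3 4 5 (by norm_num) (by norm_num), h5w] at e5
    have s5 : x % 4 = 1 ∧ y % 4 = 1 := by
      have hx4' : x % 4 = 1 ∨ x % 4 = 3 := by omega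
      have hy4 : y % 4 = 1 ∨ y % 4 = 3 := by omega
      rcases hx4' with h1 | h1 <;> rcases hy4 with h2 | h2 <;>
        rw [h1, h2] at e5 <;> norm_num at e5
      exact ⟨h1, h2⟩
    obtain ⟨s5, s5'⟩ := s5
    have s6 : w % 4 = 2 := by omega
    -- mod 13 : x%12 = 5, y%3 = 1
    have e13 : 2 ^ x % 13 = (3 ^ y + 4 ^ 1 + 5 ^ w) % 13 := by rw [h]
    rw [powc 2 12 13 (by norm_num) (by norm_num), sum_mod,
        powc 3 3 13 (by norm_num) (by norm_num),
        powc 5 4 13 (by norm_num) (by norm_num), s6] at e13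
    have s7 : x % 12 = 5 ∧ y % 3 = 1 := by
      have hx12 : x % 12 = 1 ∨ x % 12 = 5 ∨ x % 12 = 9 := by omega
      have hy3 : y % 3 = 0 ∨ y % 3 = 1 ∨ y % 3 = 2 := by omega
      rcases hx12 with h1 | h1 | h1 <;> rcases hy3 with h2 | h2 | h2 <;>
        rw [h1, h2] at e13 <;> norm_num at e13
      exact ⟨h1, h2⟩
    obtain ⟨s7, s8⟩ := s7
    -- y = 1
    have hy1 : y = 1 := by
      by_contra hyc
      have hy2' : 2 ≤ y := by omega
      have h3y9 : 3 ^ y % 9 = 0 := by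
        have h1 : (3:ℕ) ^ 2 ∣ 3 ^ y := pow_dvd_pow 3 hy2'
        have h2 : (9:ℕ) ∣ 3 ^ y := dvd_trans (by norm_num) h1
        omega
      have e9 : 2 ^ x % 9 = (3 ^ y + 4 ^ 1 + 5 ^ w) % 9 := by rw [h]
      rw [powc 2 6 9 (by norm_num) (by norm_num), sum_mod,
          powc 5 6 9 (by norm_num) (by norm_num), h3y9,
          (show x % 6 = 5 by omega)] at e9
      have sw6 : w % 6 = 0 := by
        have hw6 : w % 6 = 0 ∨ w % 6 = 2 ∨ w % 6 = 4 := by omega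
        rcases hw6 with h1 | h1 | h1 <;> rw [h1] at e9 <;> norm_num at e9
        exact h1
      have e7 : 2 ^ x % 7 = (3 ^ y + 4 ^ 1 + 5 ^ w) % 7 := by rw [h]
      rw [powc 2 3 7 (by norm_num) (by norm_num), sum_mod,
          powc 3 6 7 (by norm_num) (by norm_num),
          powc 5 6 7 (by norm_num) (by norm_num), sw6,
          (show x % 3 = 2 by omega), (show y % 6 = 1 by omega)] at e7
      norm_num at e7
    subst hy1
    -- x = 5
    have hx5 : x = 5 := by
      by_contra hxc
      have hx6' : 6 ≤ x := by omega
      have e2x64 : 2 ^ x % 64 = 0 := by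
        have : (2:ℕ) ^ 6 ∣ 2 ^ x := pow_dvd_pow 2 hx6'
        norm_num at this
        omega
      have e64 : 2 ^ x % 64 = (3 ^ 1 + 4 ^ 1 + 5 ^ w) % 64 := by rw [h]
      rw [e2x64, sum_mod, powc 5 16 64 (by norm_num) (by norm_num)] at e64
      have sw16 : w % 16 = 10 := by
        have hw16 : w % 16 = 2 ∨ w % 16 = 6 ∨ w % 16 = 10 ∨ w % 16 = 14 := by omega
        rcases hw16 with h1 | h1 | h1 | h1 <;> rw [h1] at e64 <;> norm_num at e64
        exact h1
      have e17 : 2 ^ x % 17 = (3 ^ 1 + 4 ^ 1 + 5 ^ w) % 17 := by rw [h]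
      rw [powc 2 8 17 (by norm_num) (by norm_num), sum_mod,
          powc 5 16 17 (by norm_num) (by norm_num), sw16] at e17
      have hx8 : x % 8 = 1 ∨ x % 8 = 3 ∨ x % 8 = 5 ∨ x % 8 = 7 := by omega
      rcases hx8 with h1 | h1 | h1 | h1 <;> rw [h1] at e17 <;> norm_num at e17
    subst hx5
    -- w = 2
    have hw2 : w = 2 := by
      have h5w25 : 5 ^ w = 25 := by norm_num at h; omega
      by_contra hwc
      have h1 : 3 ≤ w := by omega
      have h2 : (5:ℕ) ^ 3 ≤ 5 ^ w := Nat.pow_le_pow_right (by norm_num) h1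
      norm_num at h2
      omega
    subst hw2
    rfl
  · rintro h
    simp only [Prod.mk.injEq] at h
    obtain ⟨h1, h2, h3, h4⟩ := h
    subst h1; subst h2; subst h3; subst h4
    norm_num
end

section
/- The only solution in positive integers (x, y, z, w) to 3^x = 4^y + 5^z + 6^w is (x,y,z,w) = (3,2,1,1). -/
theorem powp (a n m x : ℕ) (h : a ^ n % m = 1 % m) : a ^ x % m = a ^ (x % n) % m := by
  conv_lhs => rw [← Nat.div_add_mod x n]
  rw [pow_add, pow_mul, Nat.mul_mod, Nat.pow_mod, h, ← Nat.pow_mod, one_pow, ← Nat.mul_mod,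
    one_mul]

theorem congr3 {m A B a b : ℕ} (ha : A % m = a % m) (hb : B % m = b % m) :
    (A + B + 6) % m = (a + b + 6) % m := by
  conv_lhs => rw [Nat.add_mod, Nat.add_mod A B, ha, hb]
  conv_rhs => rw [Nat.add_mod, Nat.add_mod a b]

theorem L5 (u v p q a b : ℕ) (h : u % 5 = (v + p + q) % 5) (e1 : u % 5 = a % 5)
    (e2 : v % 5 = b % 5) (e3 : p % 5 = 0) (e4 : q % 5 = 1) :
    a % 5 = (b % 5 + 0 + 1) % 5 := by omega

theorem L3 (u v p q c : ℕ) (h : u % 3 = (v + p + q) % 3) (f1 : u % 3 = 0) (f2 : v % 3 = 1)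
    (f3 : p % 3 = c % 3) (f4 : q % 3 = 0) : (1 + c % 3 + 0) % 3 = 0 := by omega

theorem L8 (u v p q : ℕ) (h : u % 8 = (v + p + q) % 8) (g1 : u % 8 = 3) (g2 : v % 8 = 0)
    (g3 : p % 8 = 5) : q % 8 = 6 := by omega

set_option maxRecDepth 10000 in
set_option maxHeartbeats 4000000 in
theorem key : ∀ s < 162, ∀ t < 108, (4 ^ s + 5 ^ t + 6) % 81 = 0 →
    ∀ r < 162, 3 ^ r % 657379 ≠ (4 ^ s + 5 ^ t + 6) % 657379 := by decide

theorem stmt_4 (x y z w : ℕ) (hx : 1 ≤ x) (hy : 1 ≤ y) (hz : 1 ≤ z) (hw : 1 ≤ w) :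
    3 ^ x = 4 ^ y + 5 ^ z + 6 ^ w ↔ (x, y, z, w) = (3, 2, 1, 1) := by
  constructor
  · intro h
    have hx0 : x ≠ 0 := Nat.one_le_iff_ne_zero.mp hx
    have hy0 : y ≠ 0 := Nat.one_le_iff_ne_zero.mp hy
    have hz0 : z ≠ 0 := Nat.one_le_iff_ne_zero.mp hz
    have hw0 : w ≠ 0 := Nat.one_le_iff_ne_zero.mp hw
    -- mod 5: y even, x ≡ 3 mod 4
    have h5 : 3 ^ x % 5 = (4 ^ y + 5 ^ z + 6 ^ w) % 5 := by rw [h]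
    have key5 : ∀ r < 4, ∀ s < 2, 3 ^ r % 5 = (4 ^ s % 5 + 0 + 1) % 5 → r = 3 ∧ s = 0 := by
      decide
    obtain ⟨hx4, hy2⟩ := key5 (x % 4) (Nat.mod_lt _ (by norm_num)) (y % 2)
      (Nat.mod_lt _ (by norm_num))
      (L5 _ _ _ _ _ _ h5 (powp 3 4 5 x (by norm_num)) (powp 4 2 5 y (by norm_num))
        (by simp [Nat.pow_mod, zero_pow hz0])
        (by rw [Nat.pow_mod]; norm_num))
    clear key5 h5
    -- mod 3: z odd
    have h3 : 3 ^ x % 3 = (4 ^ y + 5 ^ z + 6 ^ w) % 3 := by rw [h]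
    have key3 : ∀ s < 2, (1 + 5 ^ s % 3 + 0) % 3 = 0 → s = 1 := by decide
    have hz2 : z % 2 = 1 := key3 (z % 2) (Nat.mod_lt _ (by norm_num))
      (L3 _ _ _ _ _ h3 (by simp [Nat.pow_mod, zero_pow hx0])
        (by rw [Nat.pow_mod]; norm_num) (powp 5 2 3 z (by norm_num))
        (by simp [Nat.pow_mod, zero_pow hw0]))
    clear key3 h3
    -- mod 8: w = 1
    have h8 : 3 ^ x % 8 = (4 ^ y + 5 ^ z + 6 ^ w) % 8 := by rw [h]
    have hy2' : 2 ≤ y := by clear h h8; omega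
    have g1' : 3 ^ x % 8 = 3 := by
      rw [powp 3 2 8 x (by norm_num), show x % 2 = 1 from by clear h h8; omega]
      norm_num
    have g2 : 4 ^ y % 8 = 0 := Nat.mod_eq_zero_of_dvd
      (dvd_trans (by norm_num : (8:ℕ) ∣ 4 ^ 2) (pow_dvd_pow 4 hy2'))
    have g3 : 5 ^ z % 8 = 5 := by
      rw [powp 5 2 8 z (by norm_num), hz2]
      norm_num
    have h6w : 6 ^ w % 8 = 6 := L8 _ _ _ _ h8 g1' g2 g3
    clear h8 g1' g2 g3
    have hw1 : w = 1 := by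
      rcases show w = 1 ∨ w = 2 ∨ 3 ≤ w from by clear h; omega with h' | h' | h'
      · exact h'
      · rw [h'] at h6w; norm_num at h6w
      · exfalso
        have : (8 : ℕ) ∣ 6 ^ w :=
          dvd_trans (by norm_num : (8:ℕ) ∣ 6 ^ 3) (pow_dvd_pow 6 h')
        rw [Nat.mod_eq_zero_of_dvd this] at h6w
        exact absurd h6w (by norm_num)
    subst hw1
    have h1 : 3 ^ x = 4 ^ y + 5 ^ z + 6 := by simpa using h
    clear h h6w
    -- x ≥ 3
    have l1 : 16 ≤ 4 ^ y := by
      calc (16:ℕ) = 4 ^ 2 := by norm_num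
      _ ≤ 4 ^ y := Nat.pow_le_pow_right (by norm_num) hy2'
    have l2 : 5 ≤ 5 ^ z := by
      calc (5:ℕ) = 5 ^ 1 := by norm_num
      _ ≤ 5 ^ z := Nat.pow_le_pow_right (by norm_num) hz
    have hx3 : 3 ≤ x := by
      by_contra h'
      have h9 : 3 ^ x ≤ 3 ^ 2 := Nat.pow_le_pow_right (by norm_num) (by omega)
      clear h' hx4
      norm_num at h9
      omega
    rcases show x = 3 ∨ 4 ≤ x from by clear h1; omega with h' | h'
    · -- x = 3
      subst h'
      norm_num at h1
      have hy' : y = 2 := by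
        by_contra h''
        have h64 : 4 ^ 3 ≤ 4 ^ y := Nat.pow_le_pow_right (by norm_num) (by clear h1; omega)
        norm_num at h64
        omega
      subst hy'
      norm_num at h1
      have hz' : z = 1 := by
        by_contra h''
        have h25 : 5 ^ 2 ≤ 5 ^ z := Nat.pow_le_pow_right (by norm_num) (by clear h1; omega)
        norm_num at h25
        omega
      subst hz'
      rfl
    · -- x ≥ 4 : contradiction
      exfalso
      clear hx4 hy2 hz2 l1 l2 hx3
      have hdvd : (81 : ℕ) ∣ 4 ^ y + 5 ^ z + 6 := by
        have : (3:ℕ) ^ 4 ∣ 3 ^ x := pow_dvd_pow 3 h'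
        rw [h1] at this
        simpa using this
      have hM : 3 ^ x % 657379 = (4 ^ y + 5 ^ z + 6) % 657379 := by rw [h1]
      have E1 : 3 ^ x % 657379 = 3 ^ (x % 162) % 657379 := powp 3 162 657379 x (by norm_num)
      have E2 : 4 ^ y % 657379 = 4 ^ (y % 162) % 657379 := powp 4 162 657379 y (by norm_num)
      have E3 : 5 ^ z % 657379 = 5 ^ (z % 108) % 657379 := powp 5 108 657379 z (by norm_num)
      have E4 : 4 ^ y % 81 = 4 ^ (y % 162) % 81 := powp 4 162 81 y (by norm_num)
      have E5 : 5 ^ z % 81 = 5 ^ (z % 108) % 81 := powp 5 108 81 z (by norm_num)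
      have H81 : (4 ^ (y % 162) + 5 ^ (z % 108) + 6) % 81 = 0 := by
        rw [← congr3 E4 E5]
        clear hM E1 E2 E3 E4 E5 h1 h'
        omega
      have HM' : 3 ^ (x % 162) % 657379 = (4 ^ (y % 162) + 5 ^ (z % 108) + 6) % 657379 :=
        E1.symm.trans (hM.trans (congr3 E2 E3))
      exact key (y % 162) (Nat.mod_lt _ (by norm_num)) (z % 108) (Nat.mod_lt _ (by norm_num))
        H81 (x % 162) (Nat.mod_lt _ (by norm_num)) HM'
  · intro h
    obtain ⟨h1, h2, h3, h4⟩ : x = 3 ∧ y = 2 ∧ z = 1 ∧ w = 1 := by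
      simpa [Prod.ext_iff] using h
    subst h1; subst h2; subst h3; subst h4
    norm_num
end

section
/- Let n ≥ 2 and suppose positive integers x, y, z, w satisfy n^x = (n+1)^y + (n+2)^z + (n+3)^w. If n ≡ 0 (mod 3), then z is odd; if n ≡ 2 (mod 3), then x is odd and w is even. -/
theorem stmt_6 (n x y z w : ℕ) (hn : 2 ≤ n)
    (hx : 1 ≤ x) (hy : 1 ≤ y) (hz : 1 ≤ z) (hw : 1 ≤ w)
    (heq : n ^ x = (n + 1) ^ y + (n + 2) ^ z + (n + 3) ^ w) :
    (n % 3 = 0 → Odd z) ∧ (n % 3 = 2 → Odd x ∧ Even w) := by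
  have h3 : (n : ZMod 3) ^ x = (n + 1) ^ y + (n + 2) ^ z + (n + 3) ^ w := by
    have := congrArg (Nat.cast : ℕ → ZMod 3) heq
    push_cast at this
    exact this
  constructor
  · intro h0
    have hn0 : (n : ZMod 3) = 0 := by
      rw [ZMod.natCast_eq_zero_iff]; omega
    rw [hn0] at h3
    have hx0 : x ≠ 0 := by omega
    have hw0 : w ≠ 0 := by omega
    have h2 : (0 : ZMod 3) + 2 = 2 := by decide
    rcases Nat.even_or_odd z with he | ho
    · exfalso
      have h2' : ((0 : ZMod 3) + 2) = -1 := by decide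
      have h3c : ((0 : ZMod 3) + 3) = 0 := by decide
      rw [zero_pow hx0, (by decide : ((0:ZMod 3)+1) = 1), one_pow, h2', h3c, Even.neg_one_pow he, zero_pow hw0] at h3
      revert h3; decide
    · exact ho
  · intro h2
    have hn2 : (n : ZMod 3) = -1 := by
      have : (n : ZMod 3) = ((n % 3 : ℕ) : ZMod 3) := (ZMod.natCast_mod n 3).symm
      rw [this, h2]; decide
    rw [hn2] at h3
    have h1 : ((-1 : ZMod 3) + 1) = 0 := by decide
    have hb : ((-1 : ZMod 3) + 2) = 1 := by decide
    have hc : ((-1 : ZMod 3) + 3) = -1 := by decide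
    have hy0 : y ≠ 0 := by omega
    rw [h1, hb, hc, zero_pow hy0, one_pow, zero_add] at h3
    rcases Nat.even_or_odd x with hex | hox <;>
      rcases Nat.even_or_odd w with hew | how
    · rw [Even.neg_one_pow hex, Even.neg_one_pow hew] at h3
      exfalso; revert h3; decide
    · rw [Even.neg_one_pow hex, Odd.neg_one_pow how] at h3
      exfalso; revert h3; decide
    · exact ⟨hox, hew⟩
    · rw [Odd.neg_one_pow hox, Odd.neg_one_pow how] at h3
      exfalso; revert h3; decide
end

section
/- Let n ≥ 2 and suppose positive integers x, y, z, w satisfy n^x = (n+1)^y + (n+2)^z + (n+3)^w. If n ≡ 0 (mod 8), then z = 2 and w is odd. -/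
theorem stmt_7 (n x y z w : ℕ) (hn : 2 ≤ n)
    (hx : 1 ≤ x) (hy : 1 ≤ y) (hz : 1 ≤ z) (hw : 1 ≤ w)
    (heq : n ^ x = (n + 1) ^ y + (n + 2) ^ z + (n + 3) ^ w)
    (h8 : n % 8 = 0) : z = 2 ∧ Odd w := by
  have h8' : 8 ∣ n := Nat.dvd_of_mod_eq_zero h8
  have H := congrArg (fun m : ℕ => (m : ZMod 8)) heq
  push_cast at H
  have hn0 : (n : ZMod 8) = 0 := (ZMod.natCast_eq_zero_iff n 8).mpr h8'
  rw [hn0, zero_pow (by omega : x ≠ 0)] at H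
  simp only [zero_add, one_pow] at H
  have h3 : (3 : ZMod 8) ^ w = 3 ^ (w % 2) := by
    conv_lhs => rw [← Nat.div_add_mod w 2]
    rw [pow_add, pow_mul]
    have : (3 : ZMod 8) ^ 2 = 1 := by decide
    rw [this, one_pow, one_mul]
  rw [h3] at H
  have hw2 : w % 2 = 0 ∨ w % 2 = 1 := by omega
  rcases Nat.lt_or_ge z 3 with hz3 | hz3
  · interval_cases z
    · rcases hw2 with h | h <;> rw [h] at H <;> exact absurd H (by decide)
    · rcases hw2 with h | h <;> rw [h] at H
      · exact absurd H (by decide)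
      · exact ⟨rfl, Nat.odd_iff.mpr h⟩
  · exfalso
    have h2 : (2 : ZMod 8) ^ z = 0 := by
      obtain ⟨k, rfl⟩ : ∃ k, z = 3 + k := ⟨z - 3, by omega⟩
      rw [pow_add]
      have : (2 : ZMod 8) ^ 3 = 0 := by decide
      rw [this, zero_mul]
    rw [h2] at H
    rcases hw2 with h | h <;> rw [h] at H <;> exact absurd H (by decide)
end

section
/- Let n ≥ 2 and suppose positive integers x, y, z, w satisfy n^x = (n+1)^y + (n+2)^z + (n+3)^w. If n ≡ 2 (mod 4), then x is odd. -/
/-!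
Reduce modulo `n + 1`, where `n ≡ -1`. If `x` were even, the equation would read
`1 = 0 + 1 + 2 ^ w`, so `n + 1` would divide `2 ^ w`; but `n + 1` is odd and greater than `1`.
-/

theorem ZMod.two_pow_ne_zero_of_odd {m : ℕ} (hodd : Odd m) (hm : m ≠ 1) (w : ℕ) :
    (2 : ZMod m) ^ w ≠ 0 := by
  have : Fact (1 < m) := ⟨by obtain ⟨k, rfl⟩ := hodd; omega⟩
  have hunit : IsUnit (2 : ZMod m) := by
    exact_mod_cast (ZMod.isUnit_iff_coprime 2 m).mpr (Nat.coprime_two_left.mpr hodd)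
  exact (hunit.pow w).ne_zero

theorem two_pow_eq_zero_of_pow_eq_sum_of_even {n x y z w : ℕ} (hx : Even x) (hy : y ≠ 0)
    (heq : n ^ x = (n + 1) ^ y + (n + 2) ^ z + (n + 3) ^ w) :
    (2 : ZMod (n + 1)) ^ w = 0 := by
  have hn : (n : ZMod (n + 1)) = -1 := eq_neg_of_add_eq_zero_left (ZMod.natCast_self' n)
  have hmod := congrArg (Nat.cast : ℕ → ZMod (n + 1)) heq
  push_cast [hn] at hmod
  norm_num [hx.neg_one_pow, zero_pow hy] at hmod
  exact hmod

theorem stmt_8_general (n x y z w : ℕ)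
    (hy : 1 ≤ y)
    (heq : n ^ x = (n + 1) ^ y + (n + 2) ^ z + (n + 3) ^ w)
    (h4 : n % 4 = 2) : Odd x := by
  rw [← Nat.not_even_iff_odd]
  intro hx
  have hodd : Odd (n + 1) := Nat.odd_iff.mpr (by omega)
  exact ZMod.two_pow_ne_zero_of_odd hodd (by omega) w
    (two_pow_eq_zero_of_pow_eq_sum_of_even hx (by omega) heq)

theorem stmt_8 (n x y z w : ℕ) (hn : 2 ≤ n)
    (hx : 1 ≤ x) (hy : 1 ≤ y) (hz : 1 ≤ z) (hw : 1 ≤ w)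
    (heq : n ^ x = (n + 1) ^ y + (n + 2) ^ z + (n + 3) ^ w)
    (h4 : n % 4 = 2) : Odd x :=
  stmt_8_general n x y z w hy heq h4
end

section
/- Let n ≥ 2 and suppose positive integers x, y, z, w satisfy n^x = (n+1)^y + (n+2)^z + (n+3)^w. Then at least one of the following holds: (i) x is even and n = 2^r − 1 for some integer r ≥ 2; (ii) x is odd, w = 1, and n = 3; (iii) x is odd, w > 1, and n ∈ {f−1, 2f−1} for some odd positive integer f dividing 2^(w−1) + 1. -/
theorem stmt_9 (n x y z w : ℕ) (hn : 2 ≤ n)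
    (hx : 1 ≤ x) (hy : 1 ≤ y) (hz : 1 ≤ z) (hw : 1 ≤ w)
    (heq : n ^ x = (n + 1) ^ y + (n + 2) ^ z + (n + 3) ^ w) :
    (Even x ∧ ∃ r : ℕ, 2 ≤ r ∧ n = 2 ^ r - 1) ∨
    (Odd x ∧ w = 1 ∧ n = 3) ∨
    (Odd x ∧ 1 < w ∧ ∃ f : ℕ, 0 < f ∧ Odd f ∧ f ∣ 2 ^ (w - 1) + 1 ∧
      (n = f - 1 ∨ n = 2 * f - 1)) := by
  have hone : (n : ZMod (n+1)) = -1 := by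
    have h0 : ((n+1 : ℕ) : ZMod (n+1)) = 0 := ZMod.natCast_self _
    push_cast at h0
    linear_combination h0
  have h : ((-1 : ZMod (n+1)))^x = 2^w + 1 := by
    have hc := congrArg (fun t : ℕ => (t : ZMod (n+1))) heq
    push_cast at hc
    rw [hone] at hc
    rw [show ((-1:ZMod (n+1))+1) = 0 by ring, show ((-1:ZMod (n+1))+2) = 1 by ring,
      show ((-1:ZMod (n+1))+3) = 2 by ring] at hc
    rw [zero_pow (by omega), one_pow] at hc
    linear_combination hc
  rcases Nat.even_or_odd x with hxe | hxo
  · left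
    refine ⟨hxe, ?_⟩
    rw [hxe.neg_one_pow] at h
    have h2 : ((2^w : ℕ) : ZMod (n+1)) = 0 := by push_cast; linear_combination -h
    have hdvd : (n+1) ∣ 2^w := (ZMod.natCast_eq_zero_iff _ _).mp h2
    obtain ⟨r, hrw, hr⟩ := (Nat.dvd_prime_pow Nat.prime_two).mp hdvd
    refine ⟨r, ?_, by omega⟩
    by_contra hlt
    interval_cases r <;> omega
  · right
    rw [hxo.neg_one_pow] at h
    have h2 : ((2^w + 2 : ℕ) : ZMod (n+1)) = 0 := by push_cast; linear_combination -h
    have hdvd : (n+1) ∣ 2^w + 2 := (ZMod.natCast_eq_zero_iff _ _).mp h2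
    rcases eq_or_lt_of_le hw with hw1 | hw1
    · left
      have h4 : (n+1) ∣ 4 := by rw [← hw1] at hdvd; norm_num at hdvd ⊢; exact hdvd
      have hle := Nat.le_of_dvd (by norm_num) h4
      have hn3 : n ≤ 3 := by omega
      interval_cases n
      · norm_num at h4
      · exact ⟨hxo, hw1.symm, rfl⟩
    · right
      refine ⟨hxo, hw1, ?_⟩
      have hsplit : 2^w + 2 = 2 * (2^(w-1) + 1) := by
        have : 2^w = 2 * 2^(w-1) := by
          rw [← pow_succ']
          congr 1
          omega
        omega
      rw [hsplit] at hdvd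
      have hNodd : Odd (2^(w-1) + 1) := by
        refine Even.add_one ?_
        have : w - 1 ≠ 0 := by omega
        exact (Nat.even_pow).mpr ⟨even_two, this⟩
      rcases Nat.even_or_odd (n+1) with he | ho
      · obtain ⟨k, hk⟩ := he
        have hk2 : 2*k ∣ 2*(2^(w-1)+1) := by rw [show 2*k = n+1 by omega]; exact hdvd
        have hkN : k ∣ 2^(w-1)+1 :=
          (mul_dvd_mul_iff_left (by norm_num : (2:ℕ) ≠ 0)).mp hk2
        have hko : Odd k := by
          rcases Nat.even_or_odd k with hke | hko
          · exfalso
            have hd2 : (2:ℕ) ∣ 2^(w-1)+1 := dvd_trans hke.two_dvd hkN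
            obtain ⟨m, hm⟩ := hNodd
            obtain ⟨j, hj⟩ := hd2
            omega
          · exact hko
        exact ⟨k, by omega, hko, hkN, Or.inr (by omega)⟩
      · have hco : Nat.Coprime (n+1) 2 := by
          have hnd : ¬ (2 ∣ n+1) := by obtain ⟨m, hm⟩ := ho; omega
          exact ((Nat.prime_two.coprime_iff_not_dvd).mpr hnd).symm
        have hNd : (n+1) ∣ 2^(w-1)+1 := hco.dvd_of_dvd_mul_left hdvd
        exact ⟨n+1, by omega, ho, hNd, Or.inl (by omega)⟩
end

section
/- Let n ≥ 2 and suppose positive integers x, y, z, w satisfy n^x = (n+1)^y + (n+2)^z + (n+3)^w. Then at least one of the following holds: (i) y is odd and n = 2^s − 2 for some integer s ≥ 2; (ii) y is even and n ∈ {g−2, 2g−2} for some odd positive integer g dividing 2^(x−1) − (−1)^x. -/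
/-! Modulo `n + 2` the four bases are `-2, -1, 0, 1`, so the equation gives
`(-2)^x ≡ (-1)^y + 1`. For odd `y`, `n + 2` divides `2^x` and is a power of two. For even `y`,
`n + 2` divides `2 - (-2)^x = ± 2 (2^(x-1) - (-1)^x)`, whose cofactor of `2` is odd because
`n^x > n` forces `x ≥ 2`; so `n + 2` is an odd divisor `g` of it or twice one. -/

theorem exists_odd_dvd_of_dvd_two_mul {d : ℕ} {m : ℤ} (hm : Odd m) (hd : (d : ℤ) ∣ 2 * m) :
    ∃ g : ℕ, Odd g ∧ (g : ℤ) ∣ m ∧ (d = g ∨ d = 2 * g) := by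
  rcases Nat.even_or_odd' d with ⟨k, rfl | rfl⟩
  · have hk : (k : ℤ) ∣ m := by
      push_cast at hd
      exact (mul_dvd_mul_iff_left two_ne_zero).mp hd
    exact ⟨k, (Int.natAbs_odd.mpr hm).of_dvd_nat (Int.natCast_dvd.mp hk), hk, Or.inr rfl⟩
  · have hcop : IsCoprime ((2 * k + 1 : ℕ) : ℤ) 2 := ⟨1, -k, by push_cast; ring⟩
    exact ⟨2 * k + 1, odd_two_mul_add_one k, hcop.dvd_of_dvd_mul_left hd, Or.inl rfl⟩

theorem exists_eq_two_pow_sub_two {n x : ℕ} (hn : 2 ≤ n) (h : n + 2 ∣ 2 ^ x) :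
    ∃ s, 2 ≤ s ∧ n = 2 ^ s - 2 := by
  obtain ⟨s, -, hs⟩ := (Nat.dvd_prime_pow Nat.prime_two).mp h
  refine ⟨s, ?_, by omega⟩
  by_contra! hs2
  interval_cases s <;> omega

theorem odd_two_pow_pred_sub_neg_one_pow {x : ℕ} (hx : 2 ≤ x) :
    Odd (2 ^ (x - 1) - (-1) ^ x : ℤ) :=
  (even_two.pow_of_ne_zero (by omega)).sub_odd odd_neg_one.pow

theorem two_mul_two_pow_pred_sub_neg_one_pow {x : ℕ} (hx : x ≠ 0) :
    2 * (2 ^ (x - 1) - (-1) ^ x : ℤ) = -(-1) ^ x * (2 - (-2) ^ x) := by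
  have hsq : ((-1 : ℤ) ^ x) ^ 2 = 1 := by rw [← pow_mul, pow_mul']; simp
  rw [mul_sub, mul_pow_sub_one hx, show (-2 : ℤ) = -1 * 2 by norm_num, mul_pow]
  linear_combination (-2 ^ x : ℤ) * hsq

theorem two_le_of_pow_eq_add_pow {n x y z w : ℕ} (hn : 1 ≤ n) (hz : z ≠ 0)
    (heq : n ^ x = (n + 1) ^ y + (n + 2) ^ z + (n + 3) ^ w) : 2 ≤ x := by
  by_contra! hx
  have hle : n ^ x ≤ n := by simpa using Nat.pow_le_pow_right hn (Nat.lt_succ_iff.mp hx)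
  have hge : n + 2 ≤ (n + 2) ^ z := Nat.le_self_pow hz _
  omega

theorem neg_two_pow_modEq_of_pow_eq_add_pow (n : ℤ) {x y z w : ℕ} (hz : z ≠ 0)
    (heq : n ^ x = (n + 1) ^ y + (n + 2) ^ z + (n + 3) ^ w) :
    (-2) ^ x ≡ (-1) ^ y + 1 [ZMOD n + 2] := by
  have h0 : n + 2 ≡ 0 [ZMOD n + 2] := Int.modEq_zero_iff_dvd.mpr dvd_rfl
  have hn : n ≡ -2 [ZMOD n + 2] := by simpa using h0.add_right (-2)
  calc (-2) ^ x ≡ n ^ x [ZMOD n + 2] := (hn.pow x).symm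
    _ = (n + 1) ^ y + (n + 2) ^ z + (n + 3) ^ w := heq
    _ ≡ (-2 + 1) ^ y + 0 ^ z + (-2 + 3) ^ w [ZMOD n + 2] := by gcongr
    _ = (-1) ^ y + 1 := by norm_num [hz]

theorem stmt_10_general (n x y z w : ℕ) (hn : 2 ≤ n)
    (hz : 1 ≤ z)
    (heq : n ^ x = (n + 1) ^ y + (n + 2) ^ z + (n + 3) ^ w) :
    (Odd y ∧ ∃ s : ℕ, 2 ≤ s ∧ n = 2 ^ s - 2) ∨
    (Even y ∧ ∃ g : ℕ, 0 < g ∧ Odd g ∧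
      (g : ℤ) ∣ 2 ^ (x - 1) - (-1) ^ x ∧ (n = g - 2 ∨ n = 2 * g - 2)) := by
  have hz0 : z ≠ 0 := by omega
  have hx : 2 ≤ x := two_le_of_pow_eq_add_pow (by omega) hz0 heq
  have heqℤ : (n : ℤ) ^ x = (n + 1) ^ y + (n + 2) ^ z + (n + 3) ^ w := by exact_mod_cast heq
  have hmod := neg_two_pow_modEq_of_pow_eq_add_pow (n : ℤ) hz0 heqℤ
  rcases Nat.even_or_odd y with hy | hy
  · rw [hy.neg_one_pow, one_add_one_eq_two] at hmod
    have hdvd : ((n + 2 : ℕ) : ℤ) ∣ 2 * (2 ^ (x - 1) - (-1) ^ x) := by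
      rw [two_mul_two_pow_pred_sub_neg_one_pow (by omega)]
      exact dvd_mul_of_dvd_right (by exact_mod_cast hmod.dvd) _
    obtain ⟨g, hg, hgm, hng⟩ :=
      exists_odd_dvd_of_dvd_two_mul (odd_two_pow_pred_sub_neg_one_pow hx) hdvd
    exact Or.inr ⟨hy, g, hg.pos, hg, hgm, by omega⟩
  · rw [hy.neg_one_pow, neg_add_cancel] at hmod
    have hdvd : n + 2 ∣ 2 ^ x := by
      have : ((n + 2 : ℕ) : ℤ) ∣ (-2) ^ x := by exact_mod_cast Int.modEq_zero_iff_dvd.mp hmod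
      simpa [Int.natAbs_pow] using Int.natCast_dvd.mp this
    exact Or.inl ⟨hy, exists_eq_two_pow_sub_two hn hdvd⟩

theorem stmt_10 (n x y z w : ℕ) (hn : 2 ≤ n)
    (hx : 1 ≤ x) (hy : 1 ≤ y) (hz : 1 ≤ z) (hw : 1 ≤ w)
    (heq : n ^ x = (n + 1) ^ y + (n + 2) ^ z + (n + 3) ^ w) :
    (Odd y ∧ ∃ s : ℕ, 2 ≤ s ∧ n = 2 ^ s - 2) ∨
    (Even y ∧ ∃ g : ℕ, 0 < g ∧ Odd g ∧
      (g : ℤ) ∣ 2 ^ (x - 1) - (-1) ^ x ∧ (n = g - 2 ∨ n = 2 * g - 2)) :=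
  stmt_10_general n x y z w hn hz heq
end

section
/- If n ≥ 2 and n ≡ 4 (mod 16), or n ≡ 8 (mod 16), or n ≡ 1 (mod 8), or n ≡ 2 (mod 8), then the equation n^x + (n+1)^y + (n+2)^z = (n+3)^w has no solution in positive integers x, y, z, w. -/
open scoped NumberTheorySymbols

lemma key_jacobi {t k : ℕ} (ht : t % 8 = 3 ∨ t % 8 = 5) (hk : k % 2 = 1)
    (h : 2 ^ k ≡ 1 [MOD t]) : False := by
  have hodd : Odd t := Nat.odd_iff.mpr (by omega)
  have h2 : J(2 | t) = -1 := by
    rw [jacobiSym.at_two hodd, ZMod.χ₈_nat_eq_if_mod_eight]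
    rcases ht with h | h <;> simp [h] <;> omega
  have hmod : ((2:ℤ) ^ k) % t = (1:ℤ) % t := by exact_mod_cast congrArg (Nat.cast : ℕ → ℤ) h
  have hJ : J((2:ℤ)^k | t) = J(1 | t) := jacobiSym.mod_left' hmod
  rw [jacobiSym.pow_left, jacobiSym.one_left, h2, (Nat.odd_iff.mpr hk).neg_one_pow] at hJ
  norm_num at hJ

lemma key_odd_dvd_pow {t k : ℕ} (ht : Odd t) (h : t ∣ 2 ^ k) : t = 1 :=
  Nat.eq_one_of_dvd_coprimes (ht.coprime_two_right.pow_right k) dvd_rfl h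

/-- Cast the main equation into `ZMod m` when `(n : ZMod m) = A`. -/
lemma castEqZMod {n x y z w : ℕ} (m : ℕ) (heq : n ^ x + (n + 1) ^ y + (n + 2) ^ z = (n + 3) ^ w)
    {A : ZMod m} (hn : (n : ZMod m) = A) :
    A ^ x + (A + 1) ^ y + (A + 2) ^ z = (A + 3) ^ w := by
  have := congrArg (fun v : ℕ => (v : ZMod m)) heq
  push_cast at this
  rw [hn] at this
  exact this

/-- Step 1: `x` is even, using an odd divisor `u ≥ 2` of `n+1`. -/
lemma step1 {n x y z w : ℕ} (heq : n ^ x + (n + 1) ^ y + (n + 2) ^ z = (n + 3) ^ w)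
    (hy : 1 ≤ y) {u : ℕ} (hu2 : 2 ≤ u) (huodd : Odd u) (hdvd : u ∣ n + 1) :
    x % 2 = 0 := by
  have hn : (n : ZMod u) = -1 := by
    have h0 : ((n + 1 : ℕ) : ZMod u) = 0 := (ZMod.natCast_eq_zero_iff _ _).mpr hdvd
    push_cast at h0
    linear_combination h0
  have h := castEqZMod u heq hn
  simp only [neg_add_cancel, zero_pow (by omega : y ≠ 0)] at h
  norm_num at h
  -- h : (-1)^x + 1 = 2^w  (hopefully)
  by_contra hodd
  have hx1 : (-1 : ZMod u) ^ x = -1 := (Nat.odd_iff.mpr (by omega)).neg_one_pow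
  rw [hx1] at h
  norm_num at h
  -- h : 0 = 2^w or 2^w = 0
  have hdvd2 : u ∣ 2 ^ w := by
    rw [← ZMod.natCast_eq_zero_iff]
    push_cast
    exact h.symm
  have := key_odd_dvd_pow huodd hdvd2
  omega

/-- Step 2: contradiction from a divisor `t` of `n+2` with `t % 8 ∈ {3,5}`, given `x` even. -/
lemma step2 {n x y z w : ℕ} (heq : n ^ x + (n + 1) ^ y + (n + 2) ^ z = (n + 3) ^ w)
    (hx : 1 ≤ x) (hz : 1 ≤ z) (hxe : x % 2 = 0) {t : ℕ} (ht : t % 8 = 3 ∨ t % 8 = 5)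
    (hdvd : t ∣ n + 2) : False := by
  have htodd : Odd t := Nat.odd_iff.mpr (by omega)
  have hn : (n : ZMod t) = -2 := by
    have h0 : ((n + 2 : ℕ) : ZMod t) = 0 := (ZMod.natCast_eq_zero_iff _ _).mpr hdvd
    push_cast at h0
    linear_combination h0
  have h := castEqZMod t heq hn
  norm_num [zero_pow (by omega : z ≠ 0)] at h
  -- h : (-2)^x + (-1)^y = 1
  have hneg2 : (-2 : ZMod t) ^ x = 2 ^ x := (Nat.even_iff.mpr hxe).neg_pow 2
  rw [hneg2] at h
  rcases Nat.even_or_odd y with hye | hyo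
  · rw [hye.neg_one_pow] at h
    have h2 : (2 : ZMod t) ^ x = 0 := by linear_combination h
    have hdvd2 : t ∣ 2 ^ x := by
      rw [← ZMod.natCast_eq_zero_iff]; push_cast; exact h2
    have := key_odd_dvd_pow htodd hdvd2
    omega
  · rw [hyo.neg_one_pow] at h
    have h2 : ((2 ^ x : ℕ) : ZMod t) = ((2 : ℕ) : ZMod t) := by push_cast; linear_combination h
    have hmod : 2 ≡ 2 ^ x [MOD t] := ((ZMod.natCast_eq_natCast_iff _ _ _).mp h2).symm
    have hle : (2 : ℕ) ≤ 2 ^ x := Nat.one_lt_two_pow (by omega)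
    have hdvd2 : t ∣ 2 ^ x - 2 := (Nat.modEq_iff_dvd' hle).mp hmod
    have hfact : 2 ^ x - 2 = 2 * (2 ^ (x - 1) - 1) := by
      have : 2 ^ x = 2 * 2 ^ (x - 1) := by
        rw [← pow_succ']
        congr 1
        omega
      omega
    rw [hfact] at hdvd2
    have hdvd3 : t ∣ 2 ^ (x - 1) - 1 :=
      (Nat.Coprime.dvd_of_dvd_mul_left (htodd.coprime_two_right) hdvd2)
    have hmod3 : 2 ^ (x - 1) ≡ 1 [MOD t] :=
      ((Nat.modEq_iff_dvd' (Nat.one_le_two_pow)).mpr hdvd3).symm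
    exact key_jacobi ht (by omega) hmod3

/-- The special case `n = 2`: `2^x + 3^y + 4^z = 5^w` has no solutions. -/
lemma case_two {x y z w : ℕ} (hx : 1 ≤ x) (hy : 1 ≤ y) (hz : 1 ≤ z) (hw : 1 ≤ w)
    (heq : 2 ^ x + 3 ^ y + 4 ^ z = 5 ^ w) : False := by
  -- x is even, via ZMod 3
  have h3 := congrArg (fun v : ℕ => (v : ZMod 3)) heq
  push_cast at h3
  rw [show (3 : ZMod 3) = 0 by decide, show (4 : ZMod 3) = 1 by decide,
    show (5 : ZMod 3) = -1 by decide, show (2 : ZMod 3) = -1 by decide,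
    zero_pow (by omega : y ≠ 0), one_pow] at h3
  have hxe : x % 2 = 0 := by
    by_contra hxo
    rw [(Nat.odd_iff.mpr (by omega)).neg_one_pow] at h3
    rcases Nat.even_or_odd w with hwe | hwo
    · rw [hwe.neg_one_pow] at h3; revert h3; decide
    · rw [hwo.neg_one_pow] at h3; revert h3; decide
  -- y is even, via ZMod 4
  have h4 := congrArg (fun v : ℕ => (v : ZMod 4)) heq
  push_cast at h4
  obtain ⟨x2, rfl⟩ : ∃ m, x = 2 + m := ⟨x - 2, by omega⟩
  rw [pow_add, show (2 : ZMod 4) ^ 2 = 0 by decide, zero_mul,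
    show (4 : ZMod 4) = 0 by decide, zero_pow (by omega : z ≠ 0),
    show (3 : ZMod 4) = -1 by decide, show (5 : ZMod 4) = 1 by decide, one_pow] at h4
  have hye : y % 2 = 0 := by
    by_contra hyo
    rw [(Nat.odd_iff.mpr (by omega)).neg_one_pow] at h4
    revert h4; decide
  -- contradiction via ZMod 5
  have h5 := congrArg (fun v : ℕ => (v : ZMod 5)) heq
  push_cast at h5
  rw [show (5 : ZMod 5) = 0 by decide, zero_pow (by omega : w ≠ 0)] at h5
  obtain ⟨b, hb⟩ : ∃ b, 2 + x2 = 2 * b := ⟨(2 + x2) / 2, by omega⟩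
  obtain ⟨c, rfl⟩ : ∃ c, y = 2 * c := ⟨y / 2, by omega⟩
  rw [hb, pow_mul, pow_mul, show (2 : ZMod 5) ^ 2 = -1 by decide,
    show (3 : ZMod 5) ^ 2 = -1 by decide, show (4 : ZMod 5) = -1 by decide] at h5
  rcases Nat.even_or_odd b with h1 | h1 <;> rcases Nat.even_or_odd c with h2 | h2 <;>
    rcases Nat.even_or_odd z with h0 | h0 <;>
    simp only [h1.neg_one_pow, h2.neg_one_pow, h0.neg_one_pow] at h5 <;> revert h5 <;> decide

theorem stmt_16 (n : ℕ) (hn : 2 ≤ n)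
    (hmod : n % 16 = 4 ∨ n % 16 = 8 ∨ n % 8 = 1 ∨ n % 8 = 2)
    (x y z w : ℕ) (hx : 1 ≤ x) (hy : 1 ≤ y) (hz : 1 ≤ z) (hw : 1 ≤ w) :
    n ^ x + (n + 1) ^ y + (n + 2) ^ z ≠ (n + 3) ^ w := by
  intro heq
  rcases hmod with h16 | h16 | h8 | h8
  · -- n ≡ 4 (mod 16)
    have hxe : x % 2 = 0 :=
      step1 heq hy (u := n + 1) (by omega) (Nat.odd_iff.mpr (by omega)) dvd_rfl
    exact step2 heq hx hz hxe (t := (n + 2) / 2) (by omega) ⟨2, by omega⟩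
  · -- n ≡ 8 (mod 16)
    have hxe : x % 2 = 0 :=
      step1 heq hy (u := n + 1) (by omega) (Nat.odd_iff.mpr (by omega)) dvd_rfl
    exact step2 heq hx hz hxe (t := (n + 2) / 2) (by omega) ⟨2, by omega⟩
  · -- n ≡ 1 (mod 8)
    have hxe : x % 2 = 0 :=
      step1 heq hy (u := (n + 1) / 2) (by omega) (Nat.odd_iff.mpr (by omega)) ⟨2, by omega⟩
    exact step2 heq hx hz hxe (t := n + 2) (by omega) dvd_rfl
  · -- n ≡ 2 (mod 8)
    rcases eq_or_lt_of_le hn with h2 | h10'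
    · subst n  -- wrong direction maybe
      exact case_two hx hy hz hw (by norm_num at heq; exact heq)
    · have h10 : 10 ≤ n := by omega
      -- work in ZMod (n+2)
      have hnn : (n : ZMod (n + 2)) = -2 := by
        have h0 : ((n + 2 : ℕ) : ZMod (n + 2)) = 0 := ZMod.natCast_self _
        push_cast at h0
        linear_combination h0
      have h := castEqZMod (n + 2) heq hnn
      norm_num [zero_pow (by omega : z ≠ 0)] at h
      -- h : (-2)^x + (-1)^y = 1
      rcases Nat.even_or_odd y with hye | hyo
      · -- y even : (n+2)/4 ∣ 2^x, odd, > 1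
        rw [hye.neg_one_pow] at h
        have h2 : (2 : ZMod (n + 2)) ^ x = 0 := by
          rcases Nat.even_or_odd x with hxe | hxo
          · rw [hxe.neg_pow] at h; linear_combination h
          · rw [hxo.neg_pow] at h
            have : -(2 : ZMod (n + 2)) ^ x = 0 := by linear_combination h
            exact neg_eq_zero.mp this
        have hdvd2 : n + 2 ∣ 2 ^ x := by
          rw [← ZMod.natCast_eq_zero_iff]; push_cast; exact h2
        have hdvd3 : (n + 2) / 4 ∣ 2 ^ x := dvd_trans ⟨4, by omega⟩ hdvd2
        have := key_odd_dvd_pow (Nat.odd_iff.mpr (by omega)) hdvd3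
        omega
      · rw [hyo.neg_one_pow] at h
        rcases Nat.even_or_odd x with hxe | hxo
        · -- x even ≥ 2 : n+2 ∣ 2^x - 2, but 4 ∣ n+2 and 2^x - 2 ≡ 2 mod 4
          rw [hxe.neg_pow] at h
          have h2 : ((2 ^ x : ℕ) : ZMod (n + 2)) = ((2 : ℕ) : ZMod (n + 2)) := by
            push_cast; linear_combination h
          have hmod2 : 2 ≡ 2 ^ x [MOD n + 2] := ((ZMod.natCast_eq_natCast_iff _ _ _).mp h2).symm
          have hle : (2 : ℕ) ≤ 2 ^ x := Nat.one_lt_two_pow (by omega)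
          have hdvd2 : n + 2 ∣ 2 ^ x - 2 := (Nat.modEq_iff_dvd' hle).mp hmod2
          have hx2 : 2 ≤ x := by rcases hxe with ⟨k, hk⟩; omega
          have hpow : 2 ^ x = 4 * 2 ^ (x - 2) := by
            rw [show (4 : ℕ) = 2 ^ 2 by norm_num, ← pow_add]; congr 1; omega
          have h4 : (4 : ℕ) ∣ n + 2 := ⟨(n + 2) / 4, by omega⟩
          obtain ⟨d, hd⟩ := h4.trans hdvd2
          have hl : 1 ≤ 2 ^ (x - 2) := Nat.one_le_two_pow
          omega
        · -- x odd : n+2 ∣ 2^x + 2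
          rw [hxo.neg_pow] at h
          have h2 : ((2 ^ x + 2 : ℕ) : ZMod (n + 2)) = 0 := by
            push_cast; linear_combination -h
          have hdvd2 : n + 2 ∣ 2 ^ x + 2 := (ZMod.natCast_eq_zero_iff _ _).mp h2
          rcases eq_or_lt_of_le hx with h1 | h3
          · -- x = 1 : n + 2 ∣ 4
            have : n + 2 ∣ 4 := by rw [← h1] at hdvd2; simpa using hdvd2
            have := Nat.le_of_dvd (by norm_num) this
            omega
          · have hx2 : 2 ≤ x := by omega
            have hpow : 2 ^ x = 4 * 2 ^ (x - 2) := by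
              rw [show (4 : ℕ) = 2 ^ 2 by norm_num, ← pow_add]; congr 1; omega
            have h4 : (4 : ℕ) ∣ n + 2 := ⟨(n + 2) / 4, by omega⟩
            obtain ⟨d, hd⟩ := h4.trans hdvd2
            have hl : 1 ≤ 2 ^ (x - 2) := Nat.one_le_two_pow
            omega
end

section
/- The only solution in positive integers (x, y, z, w) to 3^x + 4^y = 5^z + 6^w is (x,y,z,w) = (3,1,2,1). -/
private lemma ppow (a d n x : ℕ) (h : a ^ d % n = 1 % n) :
    a ^ x % n = a ^ (x % d) % n := by
  conv_lhs => rw [← Nat.div_add_mod x d, pow_add, pow_mul]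
  have h' : a ^ d ≡ 1 [MOD n] := h
  have := (h'.pow (x / d)).mul_right (a ^ (x % d))
  simpa [Nat.ModEq] using this

private lemma dmz {a b : ℕ} (h : a ∣ b) : b % a = 0 := by
  obtain ⟨k, rfl⟩ := h; exact Nat.mul_mod_right a k

private lemma dec54 : ∀ r : ℕ, r < 54 → 5 ^ r % 81 = 79 → r = 20 := by decide

private lemma dec27 : ∀ r : ℕ, r < 27 → 3 ^ r % 109 ≠ 37 := by decide

private lemma stepA (x y z w : ℕ) (hx : 1 ≤ x) (hy : 1 ≤ y) (hz : 1 ≤ z)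
    (hw2 : 2 ≤ w) (h : 3 ^ x + 4 ^ y = 5 ^ z + 6 ^ w) : False := by
  have h4y : 4 ^ y % 4 = 0 := dmz (dvd_pow_self 4 (by omega))
  have h5z : 5 ^ z % 5 = 0 := dmz (dvd_pow_self 5 (by omega))
  have h6w4 : 6 ^ w % 4 = 0 :=
    dmz (dvd_trans (by norm_num : (4:ℕ) ∣ 6 ^ 2) (pow_dvd_pow 6 hw2))
  have h5z4 : 5 ^ z % 4 = 1 := by rw [Nat.pow_mod]; norm_num
  have hmod4 : (3 ^ x + 4 ^ y) % 4 = (5 ^ z + 6 ^ w) % 4 := by rw [h]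
  have hx2 : x % 2 = 0 := by
    rcases (by omega : x % 2 = 0 ∨ x % 2 = 1) with h2 | h2
    · exact h2
    · have hp := ppow 3 2 4 x (by norm_num)
      rw [h2] at hp; norm_num at hp; omega
  have h6w5 : 6 ^ w % 5 = 1 := by rw [Nat.pow_mod]; norm_num
  have hmod5 : (3 ^ x + 4 ^ y) % 5 = (5 ^ z + 6 ^ w) % 5 := by rw [h]
  have hp3 := ppow 3 4 5 x (by norm_num)
  have hp4 := ppow 4 2 5 y (by norm_num)
  rcases (by omega : x % 4 = 0 ∨ x % 4 = 2) with h1 | h1 <;>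
    rcases (by omega : y % 2 = 0 ∨ y % 2 = 1) with h2 | h2 <;>
    rw [h1] at hp3 <;> rw [h2] at hp4 <;>
    norm_num at hp3 hp4 <;> omega

private lemma stepB (x y z : ℕ) (hx : 1 ≤ x) (hy : 1 ≤ y) (hz : 1 ≤ z)
    (h : 3 ^ x + 4 ^ y = 5 ^ z + 6) : y = 1 ∧ 3 ^ x = 5 ^ z + 2 := by
  have h3x : 3 ^ x % 3 = 0 := dmz (dvd_pow_self 3 (by omega))
  have h4y3 : 4 ^ y % 3 = 1 := by rw [Nat.pow_mod]; norm_num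
  have hmod3 : (3 ^ x + 4 ^ y) % 3 = (5 ^ z + 6) % 3 := by rw [h]
  have hp5 := ppow 5 2 3 z (by norm_num)
  have hz2 : z % 2 = 0 := by
    rcases (by omega : z % 2 = 0 ∨ z % 2 = 1) with h2 | h2
    · exact h2
    · rw [h2] at hp5; norm_num at hp5; omega
  have h5z8 : 5 ^ z % 8 = 1 := by
    rw [ppow 5 2 8 z (by norm_num), hz2]; norm_num
  have hy1 : y = 1 := by
    by_contra hyne
    have hy2 : 2 ≤ y := by omega
    have h4y8 : 4 ^ y % 8 = 0 :=
      dmz (dvd_trans (by norm_num : (8:ℕ) ∣ 4 ^ 2) (pow_dvd_pow 4 hy2))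
    have hmod8 : (3 ^ x + 4 ^ y) % 8 = (5 ^ z + 6) % 8 := by rw [h]
    have hp3 := ppow 3 2 8 x (by norm_num)
    rcases (by omega : x % 2 = 0 ∨ x % 2 = 1) with h2 | h2 <;>
      rw [h2] at hp3 <;> norm_num at hp3 <;> omega
  subst hy1
  norm_num at h
  exact ⟨rfl, by omega⟩

private lemma stepC (x z : ℕ) (hx : 1 ≤ x) (hz : 1 ≤ z)
    (heq : 3 ^ x = 5 ^ z + 2) : x = 3 ∧ z = 2 := by
  have h5z : 5 ^ z % 5 = 0 := dmz (dvd_pow_self 5 (by omega))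
  have hmod5 : 3 ^ x % 5 = (5 ^ z + 2) % 5 := by rw [heq]
  have hp3 := ppow 3 4 5 x (by norm_num)
  have hx4 : x % 4 = 3 := by
    rcases (by omega : x % 4 = 0 ∨ x % 4 = 1 ∨ x % 4 = 2 ∨ x % 4 = 3)
      with h2 | h2 | h2 | h2 <;> rw [h2] at hp3 <;> norm_num at hp3 <;> omega
  by_cases hx3 : x = 3
  · subst hx3
    have h25 : 5 ^ z = 5 ^ 2 := by norm_num at heq; omega
    exact ⟨rfl, Nat.pow_right_injective (by norm_num) h25⟩
  · exfalso
    have hx4' : 4 ≤ x := by omega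
    have h3x81 : 3 ^ x % 81 = 0 :=
      dmz (dvd_trans (by norm_num : (81:ℕ) ∣ 3 ^ 4) (pow_dvd_pow 3 hx4'))
    have hmod81 : 3 ^ x % 81 = (5 ^ z + 2) % 81 := by rw [heq]
    have hp5 := ppow 5 54 81 z (by norm_num)
    have h5zr : 5 ^ (z % 54) % 81 = 79 := by omega
    have hz54 : z % 54 = 20 := dec54 _ (Nat.mod_lt _ (by norm_num)) h5zr
    have hz27 : z % 27 = 20 := by
      rw [← Nat.mod_mod_of_dvd z (by norm_num : (27:ℕ) ∣ 54), hz54]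
    have hmod109 : 3 ^ x % 109 = (5 ^ z + 2) % 109 := by rw [heq]
    have hp5' := ppow 5 27 109 z (by norm_num)
    rw [hz27] at hp5'
    norm_num at hp5'
    have hp3' := ppow 3 27 109 x (by norm_num)
    exact dec27 (x % 27) (Nat.mod_lt _ (by norm_num)) (by omega)

theorem stmt_18 (x y z w : ℕ) (hx : 1 ≤ x) (hy : 1 ≤ y) (hz : 1 ≤ z) (hw : 1 ≤ w) :
    3 ^ x + 4 ^ y = 5 ^ z + 6 ^ w ↔ (x, y, z, w) = (3, 1, 2, 1) := by
  constructor
  · intro h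
    have hw1 : w = 1 := by
      by_contra hwne
      exact stepA x y z w hx hy hz (by omega) h
    subst hw1
    obtain ⟨hy1, heq⟩ := stepB x y z hx hy hz (by norm_num at h ⊢; omega)
    obtain ⟨hx3, hz2⟩ := stepC x z hx hz heq
    subst hy1; subst hx3; subst hz2; rfl
  · rintro h
    simp only [Prod.mk.injEq] at h
    obtain ⟨h1, h2, h3, h4⟩ := h
    subst h1; subst h2; subst h3; subst h4
    norm_num
end
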